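/- arXiv:math/0210366 — 3 statements merged into one kernel-verified Lean document; each statement's English description precedes it below -/
import Mathlib

section
/- Let k ≥ 0. Then the Dunkl kernel satisfies: (1) E_k(x,y) = E_k(y,x) for all x,y ∈ ℝ^N; (2) E_k(λx,y) = E_k(x,λy) for all x,y ∈ ℝ^N and λ ∈ ℝ, and E_k(gx,gy) = E_k(x,y) for all x,y ∈ ℝ^N and g ∈ G; (3) the complex conjugate of E_k(x,y) equals E_k(x, ȳ) for all x ∈ ℝ^N and y ∈ ℂ^N, where ȳ is the componentwise complex conjugate. -/
open scoped RealInnerProductSpace BigOperators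
open MeasureTheory Filter

noncomputable section

/-- Euclidean space ℝ^N. -/
abbrev Vec (N : ℕ) := EuclideanSpace ℝ (Fin N)

/-- The reflection in the hyperplane orthogonal to `α`:
`σ_α x = x − (2⟨α,x⟩/⟨α,α⟩) α`. -/
def reflAt {N : ℕ} (α : Vec N) (x : Vec N) : Vec N :=
  x - ((2 * ⟪α, x⟫) / ⟪α, α⟫) • α

/-- A (reduced) root system, normalized so that `⟨α,α⟩ = 2` for all roots. -/
structure IsRootSystem {N : ℕ} (R : Finset (Vec N)) : Prop where
  ne_zero : ∀ α ∈ R, α ≠ 0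
  neg_mem : ∀ α ∈ R, -α ∈ R
  reduced : ∀ α ∈ R, ∀ β ∈ R, (∃ c : ℝ, β = c • α) → β = α ∨ β = -α
  refl_mem : ∀ α ∈ R, ∀ β ∈ R, reflAt α β ∈ R
  normalized : ∀ α ∈ R, ⟪α, α⟫ = (2 : ℝ)

/-- A positive subsystem `R₊` of a root system `R`: `R` is the disjoint union of
`R₊` and `−R₊`, the two parts being separated by a hyperplane through the origin. -/
structure IsPositiveSubsystem {N : ℕ} (R Rp : Finset (Vec N)) : Prop where
  subset : Rp ⊆ R
  mem_or_neg_mem : ∀ α ∈ R, α ∈ Rp ∨ -α ∈ Rp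
  not_mem_and_neg_mem : ∀ α ∈ R, ¬(α ∈ Rp ∧ -α ∈ Rp)
  separated : ∃ u : Vec N, ∀ α ∈ Rp, 0 < ⟪u, α⟫

/-- The finite reflection group associated with the root system `R`: the subgroup
of the orthogonal group generated by the reflections `σ_α`, `α ∈ R`. -/
def reflGroup {N : ℕ} (R : Finset (Vec N)) : Subgroup (Vec N ≃ₗᵢ[ℝ] Vec N) :=
  Subgroup.closure { g | ∃ α ∈ R, ∀ x, g x = reflAt α x }

/-- A multiplicity function: a `G`-invariant function on the root system. -/
def IsMultiplicity {N : ℕ} (R : Finset (Vec N)) (k : Vec N → ℂ) : Prop :=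
  ∀ g ∈ reflGroup R, ∀ α ∈ R, k (g α) = k α

/-- The Dunkl operator `T_ξ` associated with `R₊` and multiplicity `k`, with
the difference quotient `(f(x) − f(σ_α x))/⟨α,x⟩` interpreted as
`∫₀¹ ∂_α f(x − t⟨α,x⟩α) dt`. -/
def dunklOp {N : ℕ} (k : Vec N → ℂ) (Rp : Finset (Vec N)) (ξ : Vec N)
    (f : Vec N → ℂ) (x : Vec N) : ℂ :=
  fderiv ℝ f x ξ + ∑ α ∈ Rp, k α * ((⟪α, ξ⟫ : ℝ) : ℂ) *
    ∫ t in (0:ℝ)..(1:ℝ), fderiv ℝ f (x - (t * ⟪α, x⟫) • α) α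

/-- The `i`-th standard basis vector of ℝ^N. -/
def stdVec {N : ℕ} (i : Fin N) : Vec N := EuclideanSpace.single i (1 : ℝ)

/-- `T_i = T_{e_i}`. -/
def dunklOpI {N : ℕ} (k : Vec N → ℂ) (Rp : Finset (Vec N)) (i : Fin N) :
    (Vec N → ℂ) → Vec N → ℂ :=
  dunklOp k Rp (stdVec i)

/-- The Dunkl Laplacian `Δ_k = Σ_i T_i²`. -/
def dunklLap {N : ℕ} (k : Vec N → ℂ) (Rp : Finset (Vec N)) (f : Vec N → ℂ) (x : Vec N) : ℂ :=
  ∑ i : Fin N, dunklOpI k Rp i (dunklOpI k Rp i f) x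

/-- The Euclidean Laplacian `Δ = Σ_i ∂_i²`. -/
def euclLap {N : ℕ} (f : Vec N → ℂ) (x : Vec N) : ℂ :=
  ∑ i : Fin N, fderiv ℝ (fun y => fderiv ℝ f y (stdVec i)) x (stdVec i)

/-- Iterates of the Dunkl Laplacian. -/
def dunklLapPow {N : ℕ} (k : Vec N → ℂ) (Rp : Finset (Vec N)) :
    ℕ → (Vec N → ℂ) → Vec N → ℂ
  | 0, f => f
  | n + 1, f => dunklLap k Rp (dunklLapPow k Rp n f)

/-- The operator `e^{−Δ_k/2} = Σ_n (−1)^n (2^n n!)^{−1} Δ_k^n` (a terminating sum on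
each polynomial). -/
def expNegHalfDunklLap {N : ℕ} (k : Vec N → ℂ) (Rp : Finset (Vec N))
    (f : Vec N → ℂ) (x : Vec N) : ℂ :=
  ∑' n : ℕ, ((-1) ^ n / ((2 : ℂ) ^ n * (n.factorial : ℂ))) * dunklLapPow k Rp n f x

/-- The polynomial function on ℝ^N attached to `p ∈ Π = ℂ[ℝ^N]`. -/
def polyFun {N : ℕ} (p : MvPolynomial (Fin N) ℂ) (x : Vec N) : ℂ :=
  MvPolynomial.eval (fun i => ((x i : ℝ) : ℂ)) p

/-- The operator `T^a = Π_i T_i^{a_i}` (the `T_i` commute). -/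
def dunklMonoOp {N : ℕ} (k : Vec N → ℂ) (Rp : Finset (Vec N)) (a : Fin N →₀ ℕ)
    (f : Vec N → ℂ) : Vec N → ℂ :=
  (List.finRange N).foldr (fun i g => (dunklOpI k Rp i)^[a i] g) f

/-- `p(T)q` : substitute the Dunkl operators `T_i` for the coordinates in `p` and
apply the result to `q`. -/
def dunklPolyOp {N : ℕ} (k : Vec N → ℂ) (Rp : Finset (Vec N))
    (p : MvPolynomial (Fin N) ℂ) (f : Vec N → ℂ) (x : Vec N) : ℂ :=
  ∑ a ∈ p.support, p.coeff a * dunklMonoOp k Rp a f x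

/-- The Dunkl pairing `[p,q]_k = (p(T)q)(0)`. -/
def dunklPairing {N : ℕ} (k : Vec N → ℂ) (Rp : Finset (Vec N))
    (p q : MvPolynomial (Fin N) ℂ) : ℂ :=
  dunklPolyOp k Rp p (polyFun q) 0

/-- The weight function `w_k(x) = Π_{α ∈ R₊} |⟨α,x⟩|^{2k(α)}`. -/
def wk {N : ℕ} (k : Vec N → ℝ) (Rp : Finset (Vec N)) (x : Vec N) : ℝ :=
  ∏ α ∈ Rp, |⟪α, x⟫| ^ (2 * k α)

/-- The index `γ = Σ_{α ∈ R₊} k(α)`. -/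
def gammaIdx {N : ℕ} (k : Vec N → ℝ) (Rp : Finset (Vec N)) : ℝ := ∑ α ∈ Rp, k α

/-- The Macdonald–Mehta–Selberg constant `c_k = ∫ e^{−|x|²/2} w_k(x) dx`. -/
def ck {N : ℕ} (k : Vec N → ℝ) (Rp : Finset (Vec N)) : ℝ :=
  ∫ x : Vec N, Real.exp (-‖x‖ ^ 2 / 2) * wk k Rp x

/-- The defining property of the Dunkl kernel `E_k`: for each `y ∈ ℂ^N`,
`x ↦ E_k(x,y)` is the unique real-analytic solution of `T_ξ f = ⟨ξ,y⟩ f` with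
`f(0) = 1`. -/
def IsDunklKernel {N : ℕ} (k : Vec N → ℂ) (Rp : Finset (Vec N))
    (E : Vec N → (Fin N → ℂ) → ℂ) : Prop :=
  ∀ y : Fin N → ℂ,
    AnalyticOn ℝ (fun x => E x y) Set.univ ∧ E 0 y = 1 ∧
      ∀ ξ : Vec N, ∀ x : Vec N,
        dunklOp k Rp ξ (fun z => E z y) x = (∑ i, ((ξ i : ℝ) : ℂ) * y i) * E x y

/-- The directional derivative `∂_ξ` on polynomials. -/
def pderivDir {N : ℕ} (ξ : Vec N) (p : MvPolynomial (Fin N) ℂ) : MvPolynomial (Fin N) ℂ :=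
  ∑ i : Fin N, ((ξ i : ℝ) : ℂ) • MvPolynomial.pderiv i p

/-- The defining properties of Dunkl's intertwining operator `V_k`:
a linear isomorphism of `Π` with `V_k(𝒫_n) = 𝒫_n`, `V_k = id` on constants, and
`T_ξ ∘ V_k = V_k ∘ ∂_ξ`. -/
def IsIntertwiner {N : ℕ} (k : Vec N → ℂ) (Rp : Finset (Vec N))
    (V : MvPolynomial (Fin N) ℂ ≃ₗ[ℂ] MvPolynomial (Fin N) ℂ) : Prop :=
  (∀ n : ℕ, Submodule.map (V : MvPolynomial (Fin N) ℂ →ₗ[ℂ] MvPolynomial (Fin N) ℂ)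
      (MvPolynomial.homogeneousSubmodule (Fin N) ℂ n)
      = MvPolynomial.homogeneousSubmodule (Fin N) ℂ n) ∧
  (∀ c : ℂ, V (MvPolynomial.C c) = MvPolynomial.C c) ∧
  (∀ ξ : Vec N, ∀ p : MvPolynomial (Fin N) ℂ, ∀ x : Vec N,
      dunklOp k Rp ξ (polyFun (V p)) x = polyFun (V (pderivDir ξ p)) x)

/-- The open Weyl chamber attached to `R₊`. -/
def chamber {N : ℕ} (Rp : Finset (Vec N)) : Set (Vec N) := {x | ∀ α ∈ Rp, 0 < ⟪α, x⟫}

/-- The cone `C_δ = {x ∈ C : ⟨α,x⟩ > δ|x| for all α ∈ R₊}`. -/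
def chamberCone {N : ℕ} (Rp : Finset (Vec N)) (δ : ℝ) : Set (Vec N) :=
  {x | ∀ α ∈ Rp, δ * ‖x‖ < ⟪α, x⟫}

/-- The weighted measure `w_k(x) dx`. -/
def muW {N : ℕ} (k : Vec N → ℝ) (Rp : Finset (Vec N)) : Measure (Vec N) :=
  volume.withDensity (fun x => ENNReal.ofReal (wk k Rp x))

/-- The probability measure `dm_k = c_k^{−1} e^{−|x|²/2} w_k(x) dx`. -/
def muM {N : ℕ} (k : Vec N → ℝ) (Rp : Finset (Vec N)) : Measure (Vec N) :=
  volume.withDensity (fun x => ENNReal.ofReal ((ck k Rp)⁻¹ * Real.exp (-‖x‖ ^ 2 / 2) * wk k Rp x))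

/-- The Dunkl transform `f̂^k(ξ) = c_k^{−1} ∫ f(x) E_k(x,−iξ) w_k(x) dx`. -/
def dunklTransform {N : ℕ} (k : Vec N → ℝ) (Rp : Finset (Vec N))
    (E : Vec N → (Fin N → ℂ) → ℂ) (f : Vec N → ℂ) (ξ : Vec N) : ℂ :=
  (((ck k Rp : ℝ) : ℂ))⁻¹ *
    ∫ x : Vec N, f x * E x (fun i => -Complex.I * ((ξ i : ℝ) : ℂ)) * ((wk k Rp x : ℝ) : ℂ)

/-- `μ` is a representing probability measure at `x` for the intertwining operator `V`:
a probability measure supported in the convex hull of the `G`-orbit of `x` with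
`V p (x) = ∫ p dμ` for all polynomials `p`. -/
def IsRepMeasure {N : ℕ} (R : Finset (Vec N))
    (V : MvPolynomial (Fin N) ℂ ≃ₗ[ℂ] MvPolynomial (Fin N) ℂ)
    (x : Vec N) (μ : Measure (Vec N)) : Prop :=
  IsProbabilityMeasure μ ∧
  μ ((convexHull ℝ {z : Vec N | ∃ g ∈ reflGroup R, z = g x})ᶜ) = 0 ∧
  ∀ p : MvPolynomial (Fin N) ℂ, polyFun (V p) x = ∫ ξ, polyFun p ξ ∂μ

/-- The elements of `L²(μ)` represented by a function in `S`. -/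
def lpOf {N : ℕ} (μ : Measure (Vec N)) (S : Set (Vec N → ℂ)) : Set (Lp ℂ 2 μ) :=
  {F | ∃ f ∈ S, (F : Vec N → ℂ) =ᵐ[μ] f}

/-- Iterated partial derivatives `∂_y^m` of a function of `y ∈ ℂ^N`. -/
def iterPderivC {N : ℕ} (m : Fin N → ℕ) (F : (Fin N → ℂ) → ℂ) : (Fin N → ℂ) → ℂ :=
  (List.finRange N).foldr
    (fun i G =>
      (fun (H : (Fin N → ℂ) → ℂ) (y : Fin N → ℂ) => fderiv ℂ H y (Pi.single i 1))^[m i] G) F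

end

noncomputable section

namespace DKP

variable {N : ℕ}



lemma reflAt_normalized {α : Vec N} (hα : ⟪α, α⟫ = (2:ℝ)) (x : Vec N) :
    reflAt α x = x - ⟪α, x⟫ • α := by
  unfold reflAt
  rw [hα]
  norm_num

lemma reflAt_smul (α : Vec N) (r : ℝ) (x : Vec N) :
    reflAt α (r • x) = r • reflAt α x := by
  unfold reflAt
  rw [real_inner_smul_right, smul_sub, smul_smul]
  ring_nf

lemma reflAt_inner {α : Vec N} (hα : ⟪α, α⟫ = (2:ℝ)) (x : Vec N) :
    ⟪α, reflAt α x⟫ = -⟪α, x⟫ := by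
  rw [reflAt_normalized hα, inner_sub_right, real_inner_smul_right, hα]
  ring

lemma reflAt_invol {α : Vec N} (hα : ⟪α, α⟫ = (2:ℝ)) (x : Vec N) :
    reflAt α (reflAt α x) = x := by
  have h1 := reflAt_inner hα x
  rw [reflAt_normalized hα (reflAt α x), h1, reflAt_normalized hα x]
  module

lemma reflAt_norm {α : Vec N} (hα : ⟪α, α⟫ = (2:ℝ)) (x : Vec N) :
    ‖reflAt α x‖ = ‖x‖ := by
  have h2 : ‖reflAt α x‖ ^ 2 = ‖x‖ ^ 2 := by
    rw [reflAt_normalized hα]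
    rw [norm_sub_sq_real]
    have h3 : ⟪x, ⟪α, x⟫ • α⟫ = ⟪α, x⟫ * ⟪x, α⟫ := real_inner_smul_right x α _
    have h4 : ‖⟪α, x⟫ • α‖ ^ 2 = ⟪α, x⟫ ^ 2 * ‖α‖ ^ 2 := by
      rw [norm_smul]; rw [mul_pow]; simp [abs_sq]
    have h5 : ‖α‖ ^ 2 = 2 := by rw [← real_inner_self_eq_norm_sq, hα]
    rw [h3, h4, h5, real_inner_comm x α]
    ring
  have := congrArg Real.sqrt h2
  rwa [Real.sqrt_sq (norm_nonneg _), Real.sqrt_sq (norm_nonneg _)] at this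

lemma reflAt_self {α : Vec N} (hα : ⟪α, α⟫ = (2:ℝ)) : reflAt α α = -α := by
  rw [reflAt_normalized hα, hα]
  module

lemma reflAt_neg (α x : Vec N) : reflAt (-α) x = reflAt α x := by
  unfold reflAt
  rw [inner_neg_left, inner_neg_neg]
  rw [smul_neg]
  ring_nf
  rw [neg_smul, neg_neg]

def reflLM (α : Vec N) : Vec N →ₗ[ℝ] Vec N :=
  (LinearMap.id : Vec N →ₗ[ℝ] Vec N) - ((innerSL ℝ α).toLinearMap).smulRight α

lemma reflLM_apply {α : Vec N} (hα : ⟪α, α⟫ = (2:ℝ)) (x : Vec N) :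
    reflLM α x = reflAt α x := by
  have : reflLM α x = x - ⟪α, x⟫ • α := by
    simp [reflLM, LinearMap.sub_apply, LinearMap.smulRight_apply]
  rw [this, reflAt_normalized hα]

/-- the reflection as a linear isometry equiv -/
def reflIso (α : Vec N) (hα : ⟪α, α⟫ = (2:ℝ)) : Vec N ≃ₗᵢ[ℝ] Vec N where
  toLinearEquiv := LinearEquiv.ofInvolutive (reflLM α)
    (by
      intro x
      rw [reflLM_apply hα, reflLM_apply hα, reflAt_invol hα])
  norm_map' := by
    intro x
    show ‖reflLM α x‖ = ‖x‖
    rw [reflLM_apply hα, reflAt_norm hα]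

lemma reflIso_apply (α : Vec N) (hα : ⟪α, α⟫ = (2:ℝ)) (x : Vec N) :
    reflIso α hα x = reflAt α x := by
  show reflLM α x = reflAt α x
  rw [reflLM_apply hα]


/-- the linear functional `W y x = ∑ i, x i * y i`. -/
def W (y : Fin N → ℂ) (x : Vec N) : ℂ := ∑ i, ((x i : ℝ) : ℂ) * y i

/-- property: `f` satisfies the diagonal Dunkl equation. -/
def Star (k : Vec N → ℝ) (Rp : Finset (Vec N)) (y : Fin N → ℂ) (f : Vec N → ℂ) : Prop :=
  ∀ x, fderiv ℝ f x x
      + ∑ α ∈ Rp, ((k α : ℝ) : ℂ) * (f x - f (reflAt α x)) = W y x * f x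

section FTC

variable {f : Vec N → ℂ}

lemma contFDeriv (hf : AnalyticOnNhd ℝ f Set.univ) : Continuous (fderiv ℝ f) := by
  rw [← continuousOn_univ]
  exact (hf.fderiv).continuousOn

lemma ftc_refl (hf : AnalyticOnNhd ℝ f Set.univ) {α : Vec N} (hα : ⟪α, α⟫ = (2: ℝ))
    (x : Vec N) :
    ((⟪α, x⟫ : ℝ) : ℂ) * ∫ t in (0:ℝ)..(1:ℝ), fderiv ℝ f (x - (t * ⟪α, x⟫) • α) α
      = f x - f (reflAt α x) := by
  set c : ℝ := ⟪α, x⟫ with hc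
  have hdiff : Differentiable ℝ f := fun z => (hf z (Set.mem_univ z)).differentiableAt
  have hγ : ∀ t : ℝ, HasDerivAt (fun t : ℝ => x - (t * c) • α) (-(c • α)) t := by
    intro t
    have h1 : HasDerivAt (fun t : ℝ => t • (c • α)) ((1:ℝ) • (c • α)) t :=
      (hasDerivAt_id t).smul_const (c • α)
    have h2 : (fun t : ℝ => x - (t * c) • α) = fun t : ℝ => x - t • (c • α) := by
      funext t; rw [smul_smul, mul_comm]
    rw [h2]
    simpa using (h1.const_sub x)
  have hg : ∀ t : ℝ, HasDerivAt (fun t : ℝ => f (x - (t * c) • α))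
      (-(c • (fderiv ℝ f (x - (t * c) • α) α))) t := by
    intro t
    have := (hdiff (x - (t * c) • α)).hasFDerivAt.comp_hasDerivAt t (hγ t)
    simpa [Function.comp_def, _root_.map_neg, _root_.map_smul] using this
  have hcont : Continuous fun t : ℝ => -(c • (fderiv ℝ f (x - (t * c) • α) α)) := by
    have h1 : Continuous fun t : ℝ => x - (t * c) • α := by fun_prop
    have h2 : Continuous fun t : ℝ => fderiv ℝ f (x - (t * c) • α) :=
      (contFDeriv hf).comp h1
    exact ((h2.clm_apply continuous_const).const_smul c).neg
  have hint := intervalIntegral.integral_eq_sub_of_hasDerivAt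
    (f := fun t : ℝ => f (x - (t * c) • α)) (fun t _ => hg t)
    (hcont.intervalIntegrable 0 1)
  have hpull : ∫ t in (0:ℝ)..(1:ℝ), -(c • (fderiv ℝ f (x - (t * c) • α) α))
      = -(c • ∫ t in (0:ℝ)..(1:ℝ), fderiv ℝ f (x - (t * c) • α) α) := by
    rw [intervalIntegral.integral_neg, intervalIntegral.integral_smul]
  rw [hpull] at hint
  have h0 : ((0:ℝ) * c) • α = (0:Vec N) := by simp
  have h1 : ((1:ℝ) * c) • α = c • α := by simp
  simp only [h0, h1, sub_zero, zero_smul] at hint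
  have : c • ∫ t in (0:ℝ)..(1:ℝ), fderiv ℝ f (x - (t * c) • α) α = f x - f (x - c • α) := by
    have h2 := congrArg Neg.neg hint
    rw [neg_neg] at h2
    rw [h2]; ring
  rw [reflAt_normalized hα, ← hc]
  rw [← this, Complex.real_smul]

lemma star_of_dunkl {k : Vec N → ℝ} {Rp : Finset (Vec N)} {y : Fin N → ℂ}
    (hf : AnalyticOnNhd ℝ f Set.univ) (hnorm : ∀ α ∈ Rp, ⟪α, α⟫ = (2:ℝ))
    (heq : ∀ x, dunklOp (fun α => ((k α : ℝ) : ℂ)) Rp x f x = W y x * f x) :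
    Star k Rp y f := by
  intro x
  have h := heq x
  unfold dunklOp at h
  rw [← h]
  congr 1
  refine Finset.sum_congr rfl (fun α hα => ?_)
  rw [mul_assoc, ftc_refl hf (hnorm α hα) x]

end FTC





/-- pointwise addition under iterated derivatives -/
lemma itd_add {f g : ℝ → ℂ} (n : ℕ) (hf : ContDiff ℝ n f) (hg : ContDiff ℝ n g) (x : ℝ) :
    iteratedDeriv n (fun r => f r + g r) x = iteratedDeriv n f x + iteratedDeriv n g x := by
  simp only [iteratedDeriv_eq_iteratedFDeriv]
  rw [show (fun r => f r + g r) = f + g from rfl, iteratedFDeriv_add_apply hf.contDiffAt hg.contDiffAt]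
  rfl

lemma itd_neg {f : ℝ → ℂ} (n : ℕ) (x : ℝ) :
    iteratedDeriv n (fun r => -(f r)) x = -iteratedDeriv n f x := by
  simp only [iteratedDeriv_eq_iteratedFDeriv]
  rw [show (fun r => -(f r)) = -f from rfl, iteratedFDeriv_neg_apply]
  rfl

lemma itd_sub {f g : ℝ → ℂ} (n : ℕ) (hf : ContDiff ℝ n f) (hg : ContDiff ℝ n g) (x : ℝ) :
    iteratedDeriv n (fun r => f r - g r) x = iteratedDeriv n f x - iteratedDeriv n g x := by
  have : (fun r => f r - g r) = fun r => f r + -(g r) := by funext r; ring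
  rw [this, itd_add n hf hg.neg, sub_eq_add_neg]
  congr 1
  exact itd_neg n x

lemma itd_const_mul {f : ℝ → ℂ} (c : ℂ) (n : ℕ) (hf : ContDiff ℝ n f) (x : ℝ) :
    iteratedDeriv n (fun r => c * f r) x = c * iteratedDeriv n f x := by
  simp only [iteratedDeriv_eq_iteratedFDeriv]
  rw [show (fun r => c * f r) = c • f from rfl, iteratedFDeriv_const_smul_apply hf.contDiffAt]
  rfl

lemma itd_sum {ι : Type*} [DecidableEq ι] (s : Finset ι) (F : ι → ℝ → ℂ) (n : ℕ)
    (hF : ∀ i ∈ s, ContDiff ℝ n (F i)) (x : ℝ) :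
    iteratedDeriv n (fun r => ∑ i ∈ s, F i r) x = ∑ i ∈ s, iteratedDeriv n (F i) x := by
  induction s using Finset.induction with
  | empty =>
      simp only [Finset.sum_empty]
      simp only [iteratedDeriv_eq_iteratedFDeriv]
      rw [show (fun _ : ℝ => (0:ℂ)) = fun _ => (0:ℂ) from rfl, iteratedFDeriv_zero_fun]
      rfl
  | @insert a s' hnotmem ih =>
      simp only [Finset.sum_insert hnotmem]
      rw [itd_add n (hF a (Finset.mem_insert_self a s'))
        (ContDiff.sum fun i hi => hF i (Finset.mem_insert_of_mem hi)),
        ih fun i hi => hF i (Finset.mem_insert_of_mem hi)]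

/-- iterated derivative of `r ↦ r • g r`. -/
lemma itd_id_smul {g : ℝ → ℂ} (hg : ContDiff ℝ (⊤ : WithTop ℕ∞) g) (n : ℕ) :
    ∀ x : ℝ, iteratedDeriv (n + 1) (fun r : ℝ => r • g r) x
      = x • iteratedDeriv (n + 1) g x + ((n : ℝ) + 1) • iteratedDeriv n g x := by
  have hD : ∀ m : ℕ, Differentiable ℝ (iteratedDeriv m g) := by
    intro m
    refine hg.differentiable_iteratedDeriv m ?_
    exact lt_of_le_of_ne le_top (by simp)
  induction n with
  | zero =>
      intro x
      have h := (hasDerivAt_id' (𝕜 := ℝ) x).fun_smul ((hg.differentiable (by simp)) x).hasDerivAt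
      have h2 := h.deriv
      simp only [zero_add]
      rw [iteratedDeriv_one, iteratedDeriv_zero, h2, iteratedDeriv_one]
      simp only [Complex.real_smul]
      push_cast
      ring
  | succ n ih =>
      intro x
      have funIH : iteratedDeriv (n + 1) (fun r : ℝ => r • g r)
          = fun x => x • iteratedDeriv (n + 1) g x + ((n : ℝ) + 1) • iteratedDeriv n g x :=
        funext ih
      rw [iteratedDeriv_succ, funIH]
      have hd1 : deriv (iteratedDeriv (n+1) g) x = iteratedDeriv (n+1+1) g x :=
        (congrFun (iteratedDeriv_succ (n := n+1) (f := g)) x).symm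
      have hd2 : deriv (iteratedDeriv n g) x = iteratedDeriv (n+1) g x :=
        (congrFun (iteratedDeriv_succ (n := n) (f := g)) x).symm
      have d1 : HasDerivAt (fun x : ℝ => x • iteratedDeriv (n+1) g x)
          (x • iteratedDeriv (n+1+1) g x + (1:ℝ) • iteratedDeriv (n+1) g x) x := by
        have h := (hasDerivAt_id' (𝕜 := ℝ) x).smul ((hD (n+1) x).hasDerivAt)
        rw [hd1] at h
        exact h
      have d2 : HasDerivAt (fun x : ℝ => ((n:ℝ)+1) • iteratedDeriv n g x)
          (((n:ℝ)+1) • iteratedDeriv (n+1) g x) x := by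
        have h := ((hD n x).hasDerivAt).const_smul ((n:ℝ)+1)
        rw [hd2] at h
        exact h
      rw [(d1.fun_add d2).deriv]
      simp only [Complex.real_smul]
      push_cast
      ring

/-- coefficients along rays = diagonal iterated Fréchet derivatives. -/
lemma uco_eq {f : Vec N → ℂ} (hf : AnalyticOnNhd ℝ f Set.univ) (n : ℕ) (c : Vec N) :
    iteratedDeriv n (fun r : ℝ => f (r • c)) 0
      = iteratedFDeriv ℝ n f 0 (fun _ => c) := by
  have h1 : (fun r : ℝ => f (r • c)) = f ∘ (ContinuousLinearMap.toSpanSingleton ℝ c) := by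
    funext r; simp [ContinuousLinearMap.toSpanSingleton_apply]
  rw [h1, iteratedDeriv_eq_iteratedFDeriv,
    ContinuousLinearMap.iteratedFDeriv_comp_right _ (hf.contDiff (n := n)) _ le_rfl]
  simp [ContinuousLinearMap.toSpanSingleton_apply]

/-- an analytic function on ℝ all of whose derivatives vanish at 0 is identically 0. -/
lemma onevar_vanish {h : ℝ → ℂ} (hh : AnalyticOnNhd ℝ h Set.univ)
    (hz : ∀ m, iteratedDeriv m h 0 = 0) : ∀ r : ℝ, h r = 0 := by
  obtain ⟨p, hp⟩ := hh 0 (Set.mem_univ 0)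
  obtain ⟨rr, hball⟩ := hp
  have hdiag : ∀ m (t : ℝ), p m (fun _ => t) = 0 := by
    intro m t
    have hfs := hball.factorial_smul (y := t) m
    have h2 : iteratedFDeriv ℝ m h 0 (fun _ => t) = t ^ m • iteratedDeriv m h 0 := by
      rw [iteratedDeriv_eq_iteratedFDeriv]
      have : (fun _ : Fin m => t) = fun _ : Fin m => t • (1:ℝ) := by funext; simp
      rw [this, (iteratedFDeriv ℝ m h 0).map_smul_univ (fun _ => t) (fun _ => (1:ℝ))]
      simp
    rw [h2, hz m, smul_zero] at hfs
    have hm : (m.factorial : ℂ) ≠ 0 := by exact_mod_cast Nat.factorial_ne_zero m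
    have := hfs
    rw [← Nat.cast_smul_eq_nsmul ℂ] at this
    exact (smul_eq_zero.mp this).resolve_left hm
  have hev : h =ᶠ[nhds (0:ℝ)] 0 := by
    filter_upwards [EMetric.ball_mem_nhds (0:ℝ) hball.r_pos] with w hw
    have hsum := hball.hasSum (y := w - 0) (by simpa using hw)
    simp only [hdiag] at hsum
    have : h (0 + (w - 0)) = 0 := hsum.unique hasSum_zero
    simpa using this
  intro r
  exact hh.eqOn_zero_of_preconnected_of_eventuallyEq_zero isPreconnected_univ
    (Set.mem_univ 0) hev (Set.mem_univ r)


section REC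

variable {k : Vec N → ℝ} {Rp : Finset (Vec N)} {y : Fin N → ℂ} {f : Vec N → ℂ}

lemma W_smul (y : Fin N → ℂ) (r : ℝ) (z : Vec N) : W y (r • z) = r • W y z := by
  unfold W
  rw [Complex.real_smul, Finset.mul_sum]
  refine Finset.sum_congr rfl (fun i _ => ?_)
  have : (r • z) i = r * z i := rfl
  rw [this]
  push_cast
  ring

lemma ray_analytic (hf : AnalyticOnNhd ℝ f Set.univ) (c : Vec N) :
    AnalyticOnNhd ℝ (fun r : ℝ => f (r • c)) Set.univ := by
  have hL : (fun r : ℝ => f (r • c)) = f ∘ (ContinuousLinearMap.toSpanSingleton ℝ c) := by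
    funext r; simp [ContinuousLinearMap.toSpanSingleton_apply]
  rw [hL]
  exact hf.comp ((ContinuousLinearMap.toSpanSingleton ℝ c).analyticOnNhd Set.univ)
    (Set.mapsTo_univ _ _)

lemma ray_hasDerivAt (hf : AnalyticOnNhd ℝ f Set.univ) (c : Vec N) (r : ℝ) :
    HasDerivAt (fun s : ℝ => f (s • c)) (fderiv ℝ f (r • c) c) r := by
  have h1 : HasDerivAt (fun s : ℝ => s • c) ((1:ℝ) • c) r := (hasDerivAt_id r).smul_const c
  have := ((hf _ (Set.mem_univ (r • c))).differentiableAt).hasFDerivAt.comp_hasDerivAt r h1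
  simpa [Function.comp_def] using this

/-- The recursion satisfied by the diagonal Taylor coefficients of a `Star` solution. -/
lemma rec_coeff (hf : AnalyticOnNhd ℝ f Set.univ) (hstar : Star k Rp y f) (n : ℕ) (z : Vec N) :
    ((n:ℂ)+1) * iteratedFDeriv ℝ (n+1) f 0 (fun _ => z)
      + ∑ α ∈ Rp, ((k α:ℝ):ℂ) * (iteratedFDeriv ℝ (n+1) f 0 (fun _ => z)
          - iteratedFDeriv ℝ (n+1) f 0 (fun _ => reflAt α z))
      = ((n:ℂ)+1) * (W y z * iteratedFDeriv ℝ n f 0 (fun _ => z)) := by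
  classical
  have hray : ∀ c : Vec N, AnalyticOnNhd ℝ (fun r : ℝ => f (r • c)) Set.univ :=
    ray_analytic hf
  have hraysm : ∀ (c : Vec N), ContDiff ℝ (⊤ : WithTop ℕ∞) (fun r : ℝ => f (r • c)) :=
    fun c => (hray c).contDiff
  have hdersm : ContDiff ℝ (⊤ : WithTop ℕ∞) (deriv (fun s : ℝ => f (s • z))) :=
    ((hray z).deriv).contDiff
  have key : ∀ r : ℝ, r • (deriv (fun s : ℝ => f (s • z)) r)
      + (∑ α ∈ Rp, ((k α:ℝ):ℂ) * (f (r • z) - f (r • reflAt α z)))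
      = r • (W y z * f (r • z)) := by
    intro r
    have e2 : deriv (fun s : ℝ => f (s • z)) r = fderiv ℝ f (r • z) z :=
      (ray_hasDerivAt hf z r).deriv
    rw [e2]
    have e1 : r • (fderiv ℝ f (r • z) z) = fderiv ℝ f (r • z) (r • z) :=
      ((fderiv ℝ f (r • z)).map_smul r z).symm
    rw [e1]
    have esum : (∑ α ∈ Rp, ((k α:ℝ):ℂ) * (f (r • z) - f (r • reflAt α z)))
        = ∑ α ∈ Rp, ((k α:ℝ):ℂ) * (f (r • z) - f (reflAt α (r • z))) :=
      Finset.sum_congr rfl (fun α _ => by rw [reflAt_smul])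
    rw [esum]
    have e4 : r • (W y z * f (r • z)) = W y (r • z) * f (r • z) := by
      rw [W_smul, smul_mul_assoc]
    rw [e4]
    exact hstar (r • z)
  have keyfun : (fun r : ℝ => r • (deriv (fun s : ℝ => f (s • z)) r)
      + (∑ α ∈ Rp, ((k α:ℝ):ℂ) * (f (r • z) - f (r • reflAt α z))))
      = (fun r : ℝ => r • (W y z * f (r • z))) := funext key
  have hid := congrArg (fun (F : ℝ → ℂ) => iteratedDeriv (n+1) F 0) keyfun
  -- compute the left side
  have hF1sm : ContDiff ℝ ((n+1 : ℕ) : WithTop ℕ∞)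
      (fun r : ℝ => r • (deriv (fun s : ℝ => f (s • z)) r)) :=
    (contDiff_id.smul (hdersm.of_le le_top))
  have hFαsm : ∀ α : Vec N, ContDiff ℝ ((n+1 : ℕ) : WithTop ℕ∞)
      (fun r : ℝ => ((k α:ℝ):ℂ) * (f (r • z) - f (r • reflAt α z))) := by
    intro α
    exact contDiff_const.mul (((hraysm z).of_le le_top).sub ((hraysm (reflAt α z)).of_le le_top))
  have hF2sm : ContDiff ℝ ((n+1 : ℕ) : WithTop ℕ∞)
      (fun r : ℝ => ∑ α ∈ Rp, ((k α:ℝ):ℂ) * (f (r • z) - f (r • reflAt α z))) :=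
    ContDiff.sum (fun α _ => hFαsm α)
  have hL : iteratedDeriv (n+1) (fun r : ℝ => r • (deriv (fun s : ℝ => f (s • z)) r)
      + (∑ α ∈ Rp, ((k α:ℝ):ℂ) * (f (r • z) - f (r • reflAt α z)))) 0
      = ((n:ℝ)+1) • iteratedFDeriv ℝ (n+1) f 0 (fun _ => z)
        + ∑ α ∈ Rp, ((k α:ℝ):ℂ) * (iteratedFDeriv ℝ (n+1) f 0 (fun _ => z)
            - iteratedFDeriv ℝ (n+1) f 0 (fun _ => reflAt α z)) := by
    rw [itd_add (n+1) hF1sm hF2sm]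
    congr 1
    · rw [itd_id_smul hdersm n 0, zero_smul, zero_add, ← iteratedDeriv_succ',
        uco_eq hf (n+1) z]
    · rw [itd_sum Rp _ (n+1) (fun α _ => hFαsm α) 0]
      refine Finset.sum_congr rfl (fun α _ => ?_)
      rw [itd_const_mul _ (n+1) (((hraysm z).of_le le_top).sub ((hraysm (reflAt α z)).of_le le_top)) 0]
      congr 1
      rw [itd_sub (n+1) ((hraysm z).of_le le_top) ((hraysm (reflAt α z)).of_le le_top) 0,
        uco_eq hf (n+1) z, uco_eq hf (n+1) (reflAt α z)]
  have hgsm : ContDiff ℝ (⊤ : WithTop ℕ∞) (fun r : ℝ => W y z * f (r • z)) :=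
    contDiff_const.mul (hraysm z)
  have hR : iteratedDeriv (n+1) (fun r : ℝ => r • (W y z * f (r • z))) 0
      = ((n:ℝ)+1) • (W y z * iteratedFDeriv ℝ n f 0 (fun _ => z)) := by
    rw [itd_id_smul hgsm n 0, zero_smul, zero_add,
      itd_const_mul _ n ((hraysm z).of_le le_top) 0, uco_eq hf n z]
  rw [hL, hR] at hid
  rw [Complex.real_smul, Complex.real_smul] at hid
  push_cast at hid ⊢
  exact hid

end REC

section ITER

variable {k : Vec N → ℝ} {Rp : Finset (Vec N)}

/-- word action: `wordRefl l z = reflAt l₁ (reflAt l₂ (... z))`. -/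
def wordRefl (l : List (Vec N)) (z : Vec N) : Vec N := l.foldr (fun a w => reflAt a w) z

lemma wordRefl_nil (z : Vec N) : wordRefl [] z = z := rfl

lemma wordRefl_cons (a : Vec N) (l : List (Vec N)) (z : Vec N) :
    wordRefl (a :: l) z = reflAt a (wordRefl l z) := by
  simp [wordRefl]

lemma wordRefl_norm (hnorm : ∀ α ∈ Rp, ⟪α, α⟫ = (2:ℝ)) {l : List (Vec N)}
    (hl : ∀ a ∈ l, a ∈ Rp) (z : Vec N) : ‖wordRefl l z‖ = ‖z‖ := by
  induction l with
  | nil => rfl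
  | cons a l ih =>
      rw [wordRefl_cons, reflAt_norm (hnorm a (hl a List.mem_cons_self))]
      exact ih (fun b hb => hl b (List.mem_cons_of_mem a hb))

/-- The maximum-principle-style iteration: a function satisfying the averaged
eigenvalue relation with positive shift, bounded on the reflection orbit, vanishes. -/
lemma iter_vanish (hk0 : ∀ α ∈ Rp, 0 ≤ k α) {u : Vec N → ℂ} {z : Vec N} {c M : ℝ}
    (hc : 0 < c)
    (hM : ∀ l : List (Vec N), (∀ a ∈ l, a ∈ Rp) → ‖u (wordRefl l z)‖ ≤ M)
    (hrec : ∀ w : Vec N, ((c + ∑ α ∈ Rp, k α : ℝ) : ℂ) * u w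
        = ∑ α ∈ Rp, ((k α : ℝ) : ℂ) * u (reflAt α w)) :
    u z = 0 := by
  set K : ℝ := ∑ α ∈ Rp, k α with hK
  have hK0 : 0 ≤ K := Finset.sum_nonneg hk0
  have hcK : 0 < c + K := by linarith
  set q : ℝ := K / (c + K) with hq
  have hq0 : 0 ≤ q := div_nonneg hK0 (le_of_lt hcK)
  have hq1 : q < 1 := (div_lt_one hcK).mpr (by linarith)
  have claim : ∀ m : ℕ, ∀ l : List (Vec N), (∀ a ∈ l, a ∈ Rp) →
      ‖u (wordRefl l z)‖ ≤ q ^ m * M := by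
    intro m
    induction m with
    | zero => intro l hl; simpa using hM l hl
    | succ m ih =>
        intro l hl
        have h1 := hrec (wordRefl l z)
        have h2 : ‖((c + K : ℝ) : ℂ) * u (wordRefl l z)‖ = (c + K) * ‖u (wordRefl l z)‖ := by
          rw [norm_mul, Complex.norm_real, Real.norm_eq_abs, abs_of_pos hcK]
        have h3 : ‖∑ α ∈ Rp, ((k α : ℝ) : ℂ) * u (reflAt α (wordRefl l z))‖
            ≤ ∑ α ∈ Rp, (k α) * (q ^ m * M) := by
          refine le_trans (norm_sum_le _ _) (Finset.sum_le_sum fun α hα => ?_)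
          rw [norm_mul, Complex.norm_real, Real.norm_eq_abs, abs_of_nonneg (hk0 α hα)]
          refine mul_le_mul_of_nonneg_left ?_ (hk0 α hα)
          have := ih (α :: l) (by
            intro b hb
            rcases List.mem_cons.mp hb with hb | hb
            · exact hb ▸ hα
            · exact hl b hb)
          rwa [wordRefl_cons] at this
        have h4 : (c + K) * ‖u (wordRefl l z)‖ ≤ K * (q ^ m * M) := by
          rw [← h2]
          rw [h1]
          refine le_trans h3 ?_
          rw [← Finset.sum_mul]
        have h5 : ‖u (wordRefl l z)‖ ≤ (K * (q ^ m * M)) / (c + K) :=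
          (le_div_iff₀ hcK).mpr (by linarith [h4])
        refine le_trans h5 (le_of_eq ?_)
        rw [hq, pow_succ]
        field_simp

  have hlim : Tendsto (fun m : ℕ => q ^ m * M) atTop (nhds 0) := by
    have := (tendsto_pow_atTop_nhds_zero_of_lt_one hq0 hq1).mul_const M
    simpa using this
  have hle : ‖u z‖ ≤ 0 := by
    refine ge_of_tendsto hlim (Filter.Eventually.of_forall fun m => ?_)
    have := claim m [] (by simp)
    simpa [wordRefl_nil] using this
  simpa using norm_le_zero_iff.mp hle

end ITER

section UNIQ

variable {k : Vec N → ℝ} {Rp : Finset (Vec N)} {y : Fin N → ℂ} {f g : Vec N → ℂ}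

lemma diag_bound (n : ℕ) (f : Vec N → ℂ) (w : Vec N) :
    ‖iteratedFDeriv ℝ n f 0 (fun _ => w)‖ ≤ ‖iteratedFDeriv ℝ n f 0‖ * ‖w‖ ^ n := by
  refine le_trans ((iteratedFDeriv ℝ n f 0).le_opNorm _) ?_
  simp [Finset.prod_const]

lemma vanish (hnorm : ∀ α ∈ Rp, ⟪α, α⟫ = (2:ℝ)) (hk0 : ∀ α ∈ Rp, 0 ≤ k α)
    (hf : AnalyticOnNhd ℝ f Set.univ) (h0 : f 0 = 0) (hstar : Star k Rp y f) :
    ∀ x, f x = 0 := by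
  have uzero : ∀ n (z : Vec N), iteratedFDeriv ℝ n f 0 (fun _ => z) = 0 := by
    intro n
    induction n with
    | zero =>
        intro z
        rw [iteratedFDeriv_zero_apply]
        exact h0
    | succ n ih =>
        intro z
        have hrec : ∀ w : Vec N,
            ((((n:ℝ)+1) + ∑ α ∈ Rp, k α : ℝ) : ℂ) * (iteratedFDeriv ℝ (n+1) f 0 (fun _ => w))
            = ∑ α ∈ Rp, ((k α : ℝ) : ℂ) * (iteratedFDeriv ℝ (n+1) f 0 (fun _ => reflAt α w)) := by
          intro w
          have h := rec_coeff hf hstar n w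
          rw [ih w, mul_zero, mul_zero] at h
          have e1 : ∑ α ∈ Rp, ((k α:ℝ):ℂ) * (iteratedFDeriv ℝ (n+1) f 0 (fun _ => w)
              - iteratedFDeriv ℝ (n+1) f 0 (fun _ => reflAt α w))
              = (∑ α ∈ Rp, ((k α:ℝ):ℂ)) * iteratedFDeriv ℝ (n+1) f 0 (fun _ => w)
                - ∑ α ∈ Rp, ((k α:ℝ):ℂ) * iteratedFDeriv ℝ (n+1) f 0 (fun _ => reflAt α w) := by
            rw [Finset.sum_mul, ← Finset.sum_sub_distrib]
            exact Finset.sum_congr rfl fun α _ => by ring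
          rw [e1] at h
          have e2 : ((((n:ℝ)+1) + ∑ α ∈ Rp, k α : ℝ) : ℂ)
              = ((n:ℂ)+1) + ∑ α ∈ Rp, ((k α:ℝ):ℂ) := by
            push_cast
            ring
          rw [e2, add_mul]
          linear_combination h
        refine iter_vanish hk0 (c := (n:ℝ)+1)
          (M := ‖iteratedFDeriv ℝ (n+1) f 0‖ * ‖z‖ ^ (n+1)) (by positivity) ?_ hrec
        intro l hl
        refine le_trans (diag_bound (n+1) f _) ?_
        rw [wordRefl_norm hnorm hl]
  intro x
  have hψ := ray_analytic hf x
  have hall : ∀ m, iteratedDeriv m (fun r : ℝ => f (r • x)) 0 = 0 := by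
    intro m
    rw [uco_eq hf m x]
    exact uzero m x
  have := onevar_vanish hψ hall 1
  simpa using this

lemma star_sub (hf : AnalyticOnNhd ℝ f Set.univ) (hg : AnalyticOnNhd ℝ g Set.univ)
    (sf : Star k Rp y f) (sg : Star k Rp y g) :
    Star k Rp y (fun x => f x - g x) := by
  intro x
  have df := (hf x (Set.mem_univ x)).differentiableAt
  have dg := (hg x (Set.mem_univ x)).differentiableAt
  rw [fderiv_fun_sub df dg, ContinuousLinearMap.sub_apply]
  have hsum : ∑ α ∈ Rp, ((k α:ℝ):ℂ) * ((f x - g x) - (f (reflAt α x) - g (reflAt α x)))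
      = (∑ α ∈ Rp, ((k α:ℝ):ℂ) * (f x - f (reflAt α x)))
        - ∑ α ∈ Rp, ((k α:ℝ):ℂ) * (g x - g (reflAt α x)) := by
    rw [← Finset.sum_sub_distrib]
    exact Finset.sum_congr rfl fun α _ => by ring
  rw [hsum]
  have h1 := sf x
  have h2 := sg x
  linear_combination h1 - h2

lemma uniq (hnorm : ∀ α ∈ Rp, ⟪α, α⟫ = (2:ℝ)) (hk0 : ∀ α ∈ Rp, 0 ≤ k α)
    (hf : AnalyticOnNhd ℝ f Set.univ) (hg : AnalyticOnNhd ℝ g Set.univ)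
    (sf : Star k Rp y f) (sg : Star k Rp y g) (h0 : f 0 = g 0) :
    ∀ x, f x = g x := by
  have hd : AnalyticOnNhd ℝ (fun x => f x - g x) Set.univ := hf.sub hg
  have hs := star_sub hf hg sf sg
  have h00 : (fun x => f x - g x) 0 = 0 := by simp [h0]
  have hv := vanish hnorm hk0 hd h00 hs
  intro x
  have := hv x
  simp only [sub_eq_zero] at this
  exact this

end UNIQ

section GROUP

variable {R Rp : Finset (Vec N)} {k : Vec N → ℝ} {y : Fin N → ℂ} {f : Vec N → ℂ}

lemma mem_reflGroup_maps (hR : IsRootSystem R) :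
    ∀ g ∈ reflGroup R, ∀ α ∈ R, g α ∈ R := by
  intro g hg
  refine Subgroup.closure_induction ?_ ?_ ?_ ?_ hg
  · rintro x ⟨β, hβ, hx⟩ α hα
    rw [hx α]
    exact hR.refl_mem β hβ α hα
  · intro α hα
    simpa using hα
  · intro a b _ _ pa pb α hα
    have hab : (a * b) α = a (b α) := rfl
    rw [hab]
    exact pa _ (pb α hα)
  · intro a _ pa α hα
    have hsurj := Finset.surj_on_of_inj_on_of_card_le (s := R) (t := R)
      (fun β _ => a β) (fun β hβ => pa β hβ)
      (fun β γ hβ hγ h => a.injective h) le_rfl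
    obtain ⟨β, hβ, hba⟩ := hsurj α hα
    have : a⁻¹ α = β := by rw [hba]; simp
    rw [this]
    exact hβ

lemma reflIso_mem (hR : IsRootSystem R) {β : Vec N} (hβ : β ∈ R) :
    reflIso β (hR.normalized β hβ) ∈ reflGroup R :=
  Subgroup.subset_closure ⟨β, hβ, fun x => reflIso_apply β (hR.normalized β hβ) x⟩

lemma k_neg (hR : IsRootSystem R)
    (hkinv : ∀ g ∈ reflGroup R, ∀ α ∈ R, k (g α) = k α) :
    ∀ β ∈ R, k (-β) = k β := by
  intro β hβ
  have h := hkinv _ (reflIso_mem hR hβ) β hβ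
  rw [reflIso_apply, reflAt_self (hR.normalized β hβ)] at h
  exact h

lemma sum_R_eq_twice (hR : IsRootSystem R) (hRp : IsPositiveSubsystem R Rp)
    {S : Vec N → ℂ} (hS : ∀ β ∈ R, S (-β) = S β) :
    ∑ β ∈ R, S β = 2 * ∑ α ∈ Rp, S α := by
  classical
  have hunion : R = Rp ∪ Rp.image (fun a => -a) := by
    ext β
    constructor
    · intro hβ
      rcases hRp.mem_or_neg_mem β hβ with h | h
      · exact Finset.mem_union_left _ h
      · refine Finset.mem_union_right _ (Finset.mem_image.mpr ⟨-β, h, by simp⟩)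
    · intro hβ
      rcases Finset.mem_union.mp hβ with h | h
      · exact hRp.subset h
      · obtain ⟨a, ha, rfl⟩ := Finset.mem_image.mp h
        exact hR.neg_mem a (hRp.subset ha)
  have hdisj : Disjoint Rp (Rp.image (fun a => -a)) := by
    rw [Finset.disjoint_left]
    intro β hβ hβ'
    obtain ⟨a, ha, hae⟩ := Finset.mem_image.mp hβ'
    have hnegmem : -β ∈ Rp := by
      have : a = -β := by rw [← hae]; simp
      rwa [this] at ha
    exact hRp.not_mem_and_neg_mem β (hRp.subset hβ) ⟨hβ, hnegmem⟩
  rw [hunion, Finset.sum_union hdisj,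
    Finset.sum_image (fun a _ b _ h => neg_injective h)]
  have : ∑ α ∈ Rp, S (-α) = ∑ α ∈ Rp, S α :=
    Finset.sum_congr rfl (fun α hα => hS α (hRp.subset hα))
  rw [this]
  ring

lemma sum_reindex (hR : IsRootSystem R) (hRp : IsPositiveSubsystem R Rp)
    {S : Vec N → ℂ} (hS : ∀ β ∈ R, S (-β) = S β)
    {g : Vec N ≃ₗᵢ[ℝ] Vec N} (hg : g ∈ reflGroup R) :
    ∑ α ∈ Rp, S (g α) = ∑ α ∈ Rp, S α := by
  have hSg : ∀ β ∈ R, S (g (-β)) = S (g β) := by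
    intro β hβ
    rw [map_neg]
    exact hS _ (mem_reflGroup_maps hR g hg β hβ)
  have h1 : ∑ β ∈ R, S (g β) = 2 * ∑ α ∈ Rp, S (g α) :=
    sum_R_eq_twice hR hRp hSg
  have h2 : ∑ β ∈ R, S (g β) = ∑ β ∈ R, S β := by
    refine Finset.sum_nbij' (fun β => g β) (fun β => g⁻¹ β) ?_ ?_ ?_ ?_ ?_
    · intro β hβ; exact mem_reflGroup_maps hR g hg β hβ
    · intro β hβ; exact mem_reflGroup_maps hR g⁻¹ (inv_mem hg) β hβ
    · intro β _; simp
    · intro β _; simp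
    · intro β _; rfl
  have h3 := sum_R_eq_twice hR hRp hS
  have : 2 * ∑ α ∈ Rp, S (g α) = 2 * ∑ α ∈ Rp, S α := by
    rw [← h1, h2, h3]
  exact mul_left_cancel₀ (two_ne_zero) this

end GROUP

section TRANSFORM

variable {R Rp : Finset (Vec N)} {k : Vec N → ℝ} {y : Fin N → ℂ} {f : Vec N → ℂ}

lemma W_real (a b : Vec N) : W (fun i => ((b i : ℝ) : ℂ)) a = ((⟪a, b⟫ : ℝ) : ℂ) := by
  unfold W
  rw [PiLp.inner_apply]
  push_cast
  refine Finset.sum_congr rfl (fun i _ => ?_)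
  simp [RCLike.inner_apply, mul_comm]

lemma reflAt_map (g : Vec N ≃ₗᵢ[ℝ] Vec N) (α x : Vec N) :
    g (reflAt α x) = reflAt (g α) (g x) := by
  unfold reflAt
  rw [map_sub, _root_.map_smul, LinearIsometryEquiv.inner_map_map, LinearIsometryEquiv.inner_map_map]

lemma star_scale (hf : AnalyticOnNhd ℝ f Set.univ) (lam : ℝ) (h : Star k Rp y f) :
    Star k Rp (fun i => (lam : ℂ) * y i) (fun x => f (lam • x)) := by
  intro x
  have hL : HasFDerivAt (fun x : Vec N => lam • x) (lam • ContinuousLinearMap.id ℝ (Vec N)) x := by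
    simpa using ((ContinuousLinearMap.id ℝ (Vec N)).hasFDerivAt (x := x)).fun_const_smul lam
  have hd : HasFDerivAt (fun x : Vec N => f (lam • x))
      ((fderiv ℝ f (lam • x)).comp (lam • ContinuousLinearMap.id ℝ (Vec N))) x :=
    HasFDerivAt.comp x ((hf _ (Set.mem_univ _)).differentiableAt.hasFDerivAt) hL
  rw [hd.fderiv]
  have e1 : ((fderiv ℝ f (lam • x)).comp (lam • ContinuousLinearMap.id ℝ (Vec N))) x
      = fderiv ℝ f (lam • x) (lam • x) := by
    simp
  rw [e1]
  have e2 : ∑ α ∈ Rp, ((k α:ℝ):ℂ) * (f (lam • x) - f (lam • reflAt α x))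
      = ∑ α ∈ Rp, ((k α:ℝ):ℂ) * (f (lam • x) - f (reflAt α (lam • x))) :=
    Finset.sum_congr rfl (fun α _ => by rw [reflAt_smul])
  have e3 : W (fun i => (lam : ℂ) * y i) x = W y (lam • x) := by
    unfold W
    refine Finset.sum_congr rfl (fun i _ => ?_)
    have : (lam • x) i = lam * x i := rfl
    rw [this]
    push_cast
    ring
  calc fderiv ℝ f (lam • x) (lam • x)
        + ∑ α ∈ Rp, ((k α:ℝ):ℂ) * (f (lam • x) - f (lam • reflAt α x))
      = fderiv ℝ f (lam • x) (lam • x)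
        + ∑ α ∈ Rp, ((k α:ℝ):ℂ) * (f (lam • x) - f (reflAt α (lam • x))) := by rw [e2]
    _ = W y (lam • x) * f (lam • x) := h (lam • x)
    _ = W (fun i => (lam : ℂ) * y i) x * f (lam • x) := by rw [e3]

lemma star_group (hR : IsRootSystem R) (hRp : IsPositiveSubsystem R Rp)
    (hkinv : ∀ g ∈ reflGroup R, ∀ α ∈ R, k (g α) = k α)
    {g : Vec N ≃ₗᵢ[ℝ] Vec N} (hg : g ∈ reflGroup R) {b : Vec N}
    (hf : AnalyticOnNhd ℝ f Set.univ)
    (h : Star k Rp (fun i => (((g b : Vec N) i : ℝ) : ℂ)) f) :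
    Star k Rp (fun i => ((b i : ℝ) : ℂ)) (fun x => f (g x)) := by
  intro x
  have hL : HasFDerivAt (fun x : Vec N => g x)
      (g.toContinuousLinearEquiv.toContinuousLinearMap) x :=
    g.toContinuousLinearEquiv.toContinuousLinearMap.hasFDerivAt
  have hd : HasFDerivAt (fun x : Vec N => f (g x))
      ((fderiv ℝ f (g x)).comp (g.toContinuousLinearEquiv.toContinuousLinearMap)) x :=
    HasFDerivAt.comp x ((hf _ (Set.mem_univ _)).differentiableAt.hasFDerivAt) hL
  rw [hd.fderiv]
  have e1 : ((fderiv ℝ f (g x)).comp (g.toContinuousLinearEquiv.toContinuousLinearMap)) x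
      = fderiv ℝ f (g x) (g x) := rfl
  rw [e1]
  have hSeven : ∀ β ∈ R, ((k (-β):ℝ):ℂ) * (f (g x) - f (reflAt (-β) (g x)))
      = ((k β:ℝ):ℂ) * (f (g x) - f (reflAt β (g x))) := by
    intro β hβ
    rw [k_neg hR hkinv β hβ, reflAt_neg]
  have e2 : ∑ α ∈ Rp, ((k α:ℝ):ℂ) * (f (g x) - f (g (reflAt α x)))
      = ∑ α ∈ Rp, ((k α:ℝ):ℂ) * (f (g x) - f (reflAt α (g x))) := by
    have e2a : ∑ α ∈ Rp, ((k α:ℝ):ℂ) * (f (g x) - f (g (reflAt α x)))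
        = ∑ α ∈ Rp, ((k (g α):ℝ):ℂ) * (f (g x) - f (reflAt (g α) (g x))) := by
      refine Finset.sum_congr rfl (fun α hα => ?_)
      rw [reflAt_map, hkinv g hg α (hRp.subset hα)]
    rw [e2a]
    exact sum_reindex hR hRp (S := fun β => ((k β:ℝ):ℂ) * (f (g x) - f (reflAt β (g x))))
      hSeven hg
  have e3 : W (fun i => ((b i : ℝ) : ℂ)) x = W (fun i => (((g b : Vec N) i : ℝ) : ℂ)) (g x) := by
    rw [W_real, W_real, LinearIsometryEquiv.inner_map_map]
  calc fderiv ℝ f (g x) (g x) + ∑ α ∈ Rp, ((k α:ℝ):ℂ) * (f (g x) - f (g (reflAt α x)))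
      = fderiv ℝ f (g x) (g x) + ∑ α ∈ Rp, ((k α:ℝ):ℂ) * (f (g x) - f (reflAt α (g x))) := by
        rw [e2]
    _ = W (fun i => (((g b : Vec N) i : ℝ) : ℂ)) (g x) * f (g x) := h (g x)
    _ = W (fun i => ((b i : ℝ) : ℂ)) x * f (g x) := by rw [e3]

lemma star_conj (hf : AnalyticOnNhd ℝ f Set.univ) (h : Star k Rp y f) :
    Star k Rp (fun i => (starRingEnd ℂ) (y i)) (fun x => (starRingEnd ℂ) (f x)) := by
  intro x
  have hd : HasFDerivAt (fun x : Vec N => (starRingEnd ℂ) (f x))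
      ((Complex.conjCLE.toContinuousLinearMap).comp (fderiv ℝ f x)) x := by
    have hc : HasFDerivAt (fun z : ℂ => (starRingEnd ℂ) z)
        (Complex.conjCLE.toContinuousLinearMap) (f x) := by
      have h0 := Complex.conjCLE.toContinuousLinearMap.hasFDerivAt (x := f x)
      have he : (fun z : ℂ => (starRingEnd ℂ) z) = ⇑Complex.conjCLE.toContinuousLinearMap := by
        funext z; simp
      rw [he]
      exact h0
    exact HasFDerivAt.comp x hc ((hf _ (Set.mem_univ _)).differentiableAt.hasFDerivAt)
  rw [hd.fderiv]
  have e1 : ((Complex.conjCLE.toContinuousLinearMap).comp (fderiv ℝ f x)) x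
      = (starRingEnd ℂ) (fderiv ℝ f x x) := by
    simp
  rw [e1]
  have h2 := congrArg (starRingEnd ℂ) (h x)
  rw [map_add, map_sum] at h2
  have e2 : ∀ α ∈ Rp, (starRingEnd ℂ) (((k α:ℝ):ℂ) * (f x - f (reflAt α x)))
      = ((k α:ℝ):ℂ) * ((starRingEnd ℂ) (f x) - (starRingEnd ℂ) (f (reflAt α x))) := by
    intro α _
    rw [map_mul, map_sub, Complex.conj_ofReal]
  rw [Finset.sum_congr rfl e2] at h2
  have e3 : (starRingEnd ℂ) (W y x * f x)
      = W (fun i => (starRingEnd ℂ) (y i)) x * (starRingEnd ℂ) (f x) := by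
    rw [map_mul]
    congr 1
    unfold W
    rw [map_sum]
    exact Finset.sum_congr rfl (fun i _ => by rw [map_mul, Complex.conj_ofReal])
  rw [e3] at h2
  exact h2

end TRANSFORM

/-- real coercion of a vector into ℂ^N -/
def coev (b : Vec N) : Fin N → ℂ := fun i => ((b i : ℝ) : ℂ)

/-- diagonal Taylor coefficients of the kernel -/
def uC (E : Vec N → (Fin N → ℂ) → ℂ) (n : ℕ) (a b : Vec N) : ℂ :=
  iteratedFDeriv ℝ n (fun z => E z (coev b)) 0 (fun _ => a)

end DKP

end

/-- Symmetry, homogeneity, `G`-equivariance and conjugation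
properties of the Dunkl kernel (`k ≥ 0`). -/
theorem dunklKernel_properties {N : ℕ} (hN : 1 ≤ N) (R Rp : Finset (Vec N))
    (hR : IsRootSystem R) (hRp : IsPositiveSubsystem R Rp)
    (k : Vec N → ℝ) (hk : IsMultiplicity R (fun α => ((k α : ℝ) : ℂ)))
    (hk0 : ∀ α ∈ R, 0 ≤ k α)
    (E : Vec N → (Fin N → ℂ) → ℂ)
    (hE : IsDunklKernel (fun α => ((k α : ℝ) : ℂ)) Rp E) :
    (∀ x y : Vec N, E x (fun i => ((y i : ℝ) : ℂ)) = E y (fun i => ((x i : ℝ) : ℂ))) ∧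
    (∀ (x y : Vec N) (lam : ℝ),
        E (lam • x) (fun i => ((y i : ℝ) : ℂ))
          = E x (fun i => (((lam • y : Vec N) i : ℝ) : ℂ))) ∧
    (∀ (x y : Vec N), ∀ g ∈ reflGroup R,
        E (g x) (fun i => (((g y : Vec N) i : ℝ) : ℂ)) = E x (fun i => ((y i : ℝ) : ℂ))) ∧
    (∀ (x : Vec N) (y : Fin N → ℂ),
        (starRingEnd ℂ) (E x y) = E x (fun i => (starRingEnd ℂ) (y i))) := by
  classical
  have hnormp : ∀ α ∈ Rp, ⟪α, α⟫ = (2:ℝ) := fun α hα => hR.normalized α (hRp.subset hα)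
  have hk0p : ∀ α ∈ Rp, 0 ≤ k α := fun α hα => hk0 α (hRp.subset hα)
  have hkinv : ∀ g ∈ reflGroup R, ∀ α ∈ R, k (g α) = k α := fun g hg α hα =>
    Complex.ofReal_injective (hk g hg α hα)
  have hEan : ∀ y : Fin N → ℂ, AnalyticOnNhd ℝ (fun x => E x y) Set.univ := fun y =>
    analyticOn_univ.mp (hE y).1
  have hE1 : ∀ y, E 0 y = 1 := fun y => (hE y).2.1
  have hstarE : ∀ y : Fin N → ℂ, DKP.Star k Rp y (fun x => E x y) := by
    intro y
    refine DKP.star_of_dunkl (hEan y) hnormp ?_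
    intro x
    exact (hE y).2.2 x x
  -- Part 2 (homogeneity)
  have part2 : ∀ (x y : Vec N) (lam : ℝ),
      E (lam • x) (fun i => ((y i : ℝ) : ℂ))
        = E x (fun i => (((lam • y : Vec N) i : ℝ) : ℂ)) := by
    intro x y lam
    set y1 : Fin N → ℂ := fun i => ((y i : ℝ) : ℂ) with hy1
    set y2 : Fin N → ℂ := fun i => (((lam • y : Vec N) i : ℝ) : ℂ) with hy2def
    have hy2 : y2 = fun i => (lam : ℂ) * y1 i := by
      funext i
      show (((lam • y : Vec N) i : ℝ) : ℂ) = (lam : ℂ) * ((y i : ℝ) : ℂ)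
      have : (lam • y : Vec N) i = lam * y i := rfl
      rw [this]
      push_cast
      ring
    have hF : AnalyticOnNhd ℝ (fun x' => E (lam • x') y1) Set.univ := by
      have hcomp : (fun x' : Vec N => E (lam • x') y1)
          = (fun z => E z y1) ∘ ⇑(lam • ContinuousLinearMap.id ℝ (Vec N)) := by
        funext x'; simp
      rw [hcomp]
      exact (hEan y1).comp ((lam • ContinuousLinearMap.id ℝ (Vec N)).analyticOnNhd _)
        (Set.mapsTo_univ _ _)
    have hsF : DKP.Star k Rp y2 (fun x' => E (lam • x') y1) := by
      rw [hy2]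
      exact DKP.star_scale (hEan y1) lam (hstarE y1)
    exact DKP.uniq hnormp hk0p hF (hEan y2) hsF (hstarE y2)
      (by rw [smul_zero, hE1, hE1]) x
  -- Part 3 (equivariance)
  have part3 : ∀ (x y : Vec N), ∀ g ∈ reflGroup R,
      E (g x) (fun i => (((g y : Vec N) i : ℝ) : ℂ)) = E x (fun i => ((y i : ℝ) : ℂ)) := by
    intro x y g hg
    set y1 : Fin N → ℂ := fun i => ((y i : ℝ) : ℂ) with hy1
    set y2 : Fin N → ℂ := fun i => (((g y : Vec N) i : ℝ) : ℂ) with hy2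
    have hF : AnalyticOnNhd ℝ (fun x' => E (g x') y2) Set.univ := by
      have hcomp : (fun x' : Vec N => E (g x') y2)
          = (fun z => E z y2) ∘ ⇑(g.toContinuousLinearEquiv.toContinuousLinearMap) := by
        funext x'
        simp
      rw [hcomp]
      exact (hEan y2).comp ((g.toContinuousLinearEquiv.toContinuousLinearMap).analyticOnNhd _)
        (Set.mapsTo_univ _ _)
    have hsF : DKP.Star k Rp y1 (fun x' => E (g x') y2) :=
      DKP.star_group hR hRp hkinv hg (hEan y2) (hstarE y2)
    have h0 : E (g 0) y2 = E 0 y1 := by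
      have hg0 : g (0 : Vec N) = 0 := map_zero g
      rw [hg0, hE1, hE1]
    exact DKP.uniq hnormp hk0p hF (hEan y1) hsF (hstarE y1) h0 x
  -- Part 4 (conjugation)
  have part4 : ∀ (x : Vec N) (y : Fin N → ℂ),
      (starRingEnd ℂ) (E x y) = E x (fun i => (starRingEnd ℂ) (y i)) := by
    intro x y
    have hF : AnalyticOnNhd ℝ (fun x' => (starRingEnd ℂ) (E x' y)) Set.univ := by
      have hcomp : (fun x' : Vec N => (starRingEnd ℂ) (E x' y))
          = ⇑(Complex.conjCLE.toContinuousLinearMap) ∘ (fun z => E z y) := by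
        funext z; simp
      rw [hcomp]
      exact ((Complex.conjCLE.toContinuousLinearMap).analyticOnNhd _).comp (hEan y)
        (Set.mapsTo_univ _ _)
    have hsF := DKP.star_conj (hEan y) (hstarE y)
    have h0 : (starRingEnd ℂ) (E 0 y) = E 0 (fun i => (starRingEnd ℂ) (y i)) := by
      rw [hE1, hE1, map_one]
    exact DKP.uniq hnormp hk0p hF (hEan _) hsF (hstarE _) h0 x
  -- Part 1 (symmetry)
  have part1 : ∀ x y : Vec N, E x (fun i => ((y i : ℝ) : ℂ)) = E y (fun i => ((x i : ℝ) : ℂ)) := by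
    have hu0 : ∀ a b : Vec N, DKP.uC E 0 a b = 1 := by
      intro a b
      unfold DKP.uC
      rw [iteratedFDeriv_zero_apply]
      exact hE1 _
    have hequiv : ∀ (n : ℕ) {α : Vec N}, α ∈ Rp → ∀ (a b : Vec N),
        DKP.uC E n (reflAt α a) b = DKP.uC E n a (reflAt α b) := by
      intro n α hα a b
      have hα2 := hnormp α hα
      have hmem := DKP.reflIso_mem hR (hRp.subset hα)
      have hfun : ∀ r : ℝ, E (r • reflAt α a) (DKP.coev b)
          = E (r • a) (DKP.coev (reflAt α b)) := by
        intro r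
        have h3 := part3 (r • a) (reflAt α b)
          (DKP.reflIso α (hR.normalized α (hRp.subset hα))) hmem
        have e1 : (DKP.reflIso α (hR.normalized α (hRp.subset hα))) (r • a)
            = r • reflAt α a := by
          rw [DKP.reflIso_apply, DKP.reflAt_smul]
        have e2 : ((DKP.reflIso α (hR.normalized α (hRp.subset hα))) (reflAt α b) : Vec N)
            = b := by
          rw [DKP.reflIso_apply, DKP.reflAt_invol hα2]
        rw [e1, e2] at h3
        exact h3
      unfold DKP.uC
      calc iteratedFDeriv ℝ n (fun z => E z (DKP.coev b)) 0 (fun _ => reflAt α a)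
          = iteratedDeriv n (fun r : ℝ => E (r • reflAt α a) (DKP.coev b)) 0 :=
            (DKP.uco_eq (hEan (DKP.coev b)) n _).symm
        _ = iteratedDeriv n (fun r : ℝ => E (r • a) (DKP.coev (reflAt α b))) 0 := by
            rw [funext hfun]
        _ = iteratedFDeriv ℝ n (fun z => E z (DKP.coev (reflAt α b))) 0 (fun _ => a) :=
            DKP.uco_eq (hEan (DKP.coev (reflAt α b))) n a
    have hrec : ∀ (n : ℕ) (w b : Vec N),
        ((n:ℂ)+1) * DKP.uC E (n+1) w b
          + ∑ α ∈ Rp, ((k α:ℝ):ℂ) * (DKP.uC E (n+1) w b - DKP.uC E (n+1) (reflAt α w) b)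
          = ((n:ℂ)+1) * (DKP.W (DKP.coev b) w * DKP.uC E n w b) := fun n w b =>
      DKP.rec_coeff (hEan (DKP.coev b)) (hstarE (DKP.coev b)) n w
    have hWsym : ∀ a b : Vec N, DKP.W (DKP.coev b) a = DKP.W (DKP.coev a) b := by
      intro a b
      show DKP.W (fun i => ((b i : ℝ):ℂ)) a = DKP.W (fun i => ((a i : ℝ):ℂ)) b
      rw [DKP.W_real, DKP.W_real, real_inner_comm]
    have hsym : ∀ n (a b : Vec N), DKP.uC E n a b = DKP.uC E n b a := by
      intro n
      induction n with
      | zero => intro a b; rw [hu0, hu0]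
      | succ n ih =>
          intro a b
          have splitsum : ∀ (F G : Vec N → ℂ),
              ∑ α ∈ Rp, ((k α:ℝ):ℂ) * (F α - G α)
                = (∑ α ∈ Rp, ((k α:ℝ):ℂ) * F α) - ∑ α ∈ Rp, ((k α:ℝ):ℂ) * G α := by
            intro F G
            rw [← Finset.sum_sub_distrib]
            exact Finset.sum_congr rfl fun α _ => by ring
          have hDrec : ∀ w : Vec N,
              ((((n:ℝ)+1) + ∑ α ∈ Rp, k α : ℝ):ℂ)
                  * (DKP.uC E (n+1) w b - DKP.uC E (n+1) b w)
                = ∑ α ∈ Rp, ((k α:ℝ):ℂ)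
                    * (DKP.uC E (n+1) (reflAt α w) b - DKP.uC E (n+1) b (reflAt α w)) := by
            intro w
            have h1 := hrec n w b
            have h2 := hrec n b w
            have h2s : ∑ α ∈ Rp, ((k α:ℝ):ℂ)
                  * (DKP.uC E (n+1) b w - DKP.uC E (n+1) (reflAt α b) w)
                = ∑ α ∈ Rp, ((k α:ℝ):ℂ)
                  * (DKP.uC E (n+1) b w - DKP.uC E (n+1) b (reflAt α w)) :=
              Finset.sum_congr rfl (fun α hα => by rw [hequiv (n+1) hα b w])
            rw [h2s] at h2
            have hRHS : DKP.W (DKP.coev w) b * DKP.uC E n b w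
                = DKP.W (DKP.coev b) w * DKP.uC E n w b := by
              rw [hWsym b w, ih b w]
            rw [splitsum] at h1 h2
            rw [splitsum]
            have hconst1 : ∑ α ∈ Rp, ((k α:ℝ):ℂ) * DKP.uC E (n+1) w b
                = (∑ α ∈ Rp, ((k α:ℝ):ℂ)) * DKP.uC E (n+1) w b := by rw [Finset.sum_mul]
            have hconst2 : ∑ α ∈ Rp, ((k α:ℝ):ℂ) * DKP.uC E (n+1) b w
                = (∑ α ∈ Rp, ((k α:ℝ):ℂ)) * DKP.uC E (n+1) b w := by rw [Finset.sum_mul]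
            rw [hconst1] at h1
            rw [hconst2] at h2
            have e2 : ((((n:ℝ)+1) + ∑ α ∈ Rp, k α : ℝ):ℂ)
                = ((n:ℂ)+1) + ∑ α ∈ Rp, ((k α:ℝ):ℂ) := by push_cast; ring
            rw [e2]
            linear_combination h1 - h2 - ((n:ℂ)+1) * hRHS
          have peel : ∀ (l : List (Vec N)), (∀ a' ∈ l, a' ∈ Rp) → ∀ (b' : Vec N),
              ∃ cc : Vec N, ‖cc‖ = ‖b'‖
                ∧ DKP.uC E (n+1) b' (DKP.wordRefl l a) = DKP.uC E (n+1) cc a := by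
            intro l
            induction l with
            | nil => intro _ b'; exact ⟨b', rfl, rfl⟩
            | cons α l ihl =>
                intro hl b'
                have hαp : α ∈ Rp := hl α List.mem_cons_self
                have hstep : DKP.uC E (n+1) b' (DKP.wordRefl (α :: l) a)
                    = DKP.uC E (n+1) (reflAt α b') (DKP.wordRefl l a) := by
                  rw [DKP.wordRefl_cons]
                  exact (hequiv (n+1) hαp b' (DKP.wordRefl l a)).symm
                obtain ⟨cc, hcc1, hcc2⟩ := ihl (fun a' ha' => hl a' (List.mem_cons_of_mem α ha'))
                  (reflAt α b')
                refine ⟨cc, ?_, by rw [hstep, hcc2]⟩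
                rw [hcc1, DKP.reflAt_norm (hnormp α hαp)]
          have hDM : ∀ l : List (Vec N), (∀ a' ∈ l, a' ∈ Rp) →
              ‖DKP.uC E (n+1) (DKP.wordRefl l a) b - DKP.uC E (n+1) b (DKP.wordRefl l a)‖
                ≤ ‖iteratedFDeriv ℝ (n+1) (fun z => E z (DKP.coev b)) 0‖ * ‖a‖ ^ (n+1)
                  + ‖iteratedFDeriv ℝ (n+1) (fun z => E z (DKP.coev a)) 0‖ * ‖b‖ ^ (n+1) := by
            intro l hl
            refine le_trans (norm_sub_le _ _) (add_le_add ?_ ?_)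
            · refine le_trans (le_of_eq rfl) ?_
              have hb := DKP.diag_bound (n+1) (fun z => E z (DKP.coev b)) (DKP.wordRefl l a)
              refine le_trans hb ?_
              rw [DKP.wordRefl_norm hnormp hl]
            · obtain ⟨cc, hcc1, hcc2⟩ := peel l hl b
              rw [hcc2]
              have hb := DKP.diag_bound (n+1) (fun z => E z (DKP.coev a)) cc
              refine le_trans hb ?_
              rw [hcc1]
          have hDa := DKP.iter_vanish hk0p
            (u := fun w => DKP.uC E (n+1) w b - DKP.uC E (n+1) b w) (z := a)
            (c := (n:ℝ)+1)
            (M := ‖iteratedFDeriv ℝ (n+1) (fun z => E z (DKP.coev b)) 0‖ * ‖a‖ ^ (n+1)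
              + ‖iteratedFDeriv ℝ (n+1) (fun z => E z (DKP.coev a)) 0‖ * ‖b‖ ^ (n+1))
            (by positivity) hDM ?_
          · exact sub_eq_zero.mp hDa
          · intro w
            have := hDrec w
            convert this using 2
      -- end succ
    intro x y
    have hFa : AnalyticOnNhd ℝ
        (fun r : ℝ => E (r • x) (DKP.coev y) - E (r • y) (DKP.coev x)) Set.univ :=
      (DKP.ray_analytic (hEan (DKP.coev y)) x).sub (DKP.ray_analytic (hEan (DKP.coev x)) y)
    have hFd : ∀ m, iteratedDeriv m
        (fun r : ℝ => E (r • x) (DKP.coev y) - E (r • y) (DKP.coev x)) 0 = 0 := by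
      intro m
      rw [DKP.itd_sub m ((DKP.ray_analytic (hEan (DKP.coev y)) x).contDiff)
        ((DKP.ray_analytic (hEan (DKP.coev x)) y).contDiff),
        DKP.uco_eq (hEan (DKP.coev y)) m x, DKP.uco_eq (hEan (DKP.coev x)) m y]
      have := hsym m x y
      unfold DKP.uC at this
      rw [this, sub_self]
    have hF1 := DKP.onevar_vanish hFa hFd 1
    simp only [one_smul] at hF1
    exact sub_eq_zero.mp hF1
  exact ⟨part1, part2, part3, part4⟩
end

section
/- (Positive minimum principle for degree-lowering operators) Let A be a degree-lowering linear operator on Π_ℝ, i.e. deg(Ap) < deg(p) for every nonzero p ∈ Π_ℝ (with deg 0 := −∞), so that e^{tA} := Σ_{n≥0} t^n A^n/n! is a well-defined linear operator on Π_ℝ for every t ≥ 0. Then the following are equivalent: (1) for every t ≥ 0, e^{tA} maps Π_+ into Π_+; (2) for every p ∈ Π_+ and every x₀ ∈ ℝ^N with p(x₀) = 0, one has (Ap)(x₀) ≥ 0. -/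
open scoped RealInnerProductSpace BigOperators
open MeasureTheory Filter

namespace PMPaux
open MvPolynomial Finset Set Filter Topology


variable {N : ℕ}

def Sg (x : Fin N → ℝ) : ℝ := 1 + ∑ i, x i ^ 2

lemma one_le_Sg (x : Fin N → ℝ) : 1 ≤ Sg x := by
  have : (0:ℝ) ≤ ∑ i, x i ^ 2 := Finset.sum_nonneg fun i _ => sq_nonneg _
  simp only [Sg]; linarith

lemma Sg_pos (x : Fin N → ℝ) : 0 < Sg x := lt_of_lt_of_le one_pos (one_le_Sg x)

lemma one_le_sqrt_Sg (x : Fin N → ℝ) : 1 ≤ Real.sqrt (Sg x) := by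
  rw [show (1:ℝ) = Real.sqrt 1 by simp]
  exact Real.sqrt_le_sqrt (one_le_Sg x)

lemma sqrt_Sg_pos (x : Fin N → ℝ) : 0 < Real.sqrt (Sg x) :=
  lt_of_lt_of_le one_pos (one_le_sqrt_Sg x)

lemma abs_le_sqrt_Sg (x : Fin N → ℝ) (i : Fin N) : |x i| ≤ Real.sqrt (Sg x) := by
  rw [← Real.sqrt_sq_eq_abs]
  apply Real.sqrt_le_sqrt
  have : x i ^ 2 ≤ ∑ j, x j ^ 2 :=
    Finset.single_le_sum (fun j _ => sq_nonneg (x j)) (Finset.mem_univ i)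
  simp only [Sg]; linarith

lemma continuous_Sg : Continuous (Sg (N := N)) := by
  unfold Sg; fun_prop

def csum (w : MvPolynomial (Fin N) ℝ) : ℝ := ∑ a ∈ w.support, |w.coeff a|

lemma csum_nonneg (w : MvPolynomial (Fin N) ℝ) : 0 ≤ csum w :=
  Finset.sum_nonneg fun _ _ => abs_nonneg _

lemma evalBound {w : MvPolynomial (Fin N) ℝ} {m : ℕ} (hw : w.totalDegree ≤ m)
    (x : Fin N → ℝ) : |eval x w| ≤ csum w * Real.sqrt (Sg x) ^ m := by
  rw [eval_eq, csum, Finset.sum_mul]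
  refine le_trans (Finset.abs_sum_le_sum_abs _ _) (Finset.sum_le_sum fun a ha => ?_)
  rw [abs_mul, abs_prod]
  have h1 : ∀ i ∈ a.support, |x i ^ a i| ≤ Real.sqrt (Sg x) ^ a i := fun i _ => by
    rw [abs_pow]
    exact pow_le_pow_left₀ (abs_nonneg _) (abs_le_sqrt_Sg x i) _
  calc |w.coeff a| * ∏ i ∈ a.support, |x i ^ a i|
      ≤ |w.coeff a| * ∏ i ∈ a.support, Real.sqrt (Sg x) ^ a i := by
        refine mul_le_mul_of_nonneg_left ?_ (abs_nonneg _)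
        exact Finset.prod_le_prod (fun i _ => abs_nonneg _) h1
    _ = |w.coeff a| * Real.sqrt (Sg x) ^ (∑ i ∈ a.support, a i) := by
        rw [Finset.prod_pow_eq_pow_sum]
    _ ≤ |w.coeff a| * Real.sqrt (Sg x) ^ m := by
        refine mul_le_mul_of_nonneg_left ?_ (abs_nonneg _)
        refine pow_le_pow_right₀ (one_le_sqrt_Sg x) ?_
        have hd := MvPolynomial.le_totalDegree ha
        calc (∑ i ∈ a.support, a i) = a.sum fun _ e => e := rfl
          _ ≤ w.totalDegree := hd
          _ ≤ m := hw

variable (A : Module.End ℝ (MvPolynomial (Fin N) ℝ))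
variable (hA : ∀ p : MvPolynomial (Fin N) ℝ, p ≠ 0 →
        A p = 0 ∨ (A p).totalDegree < p.totalDegree)

include hA

lemma degA_zero {w : MvPolynomial (Fin N) ℝ} (hw : w.totalDegree = 0) : A w = 0 := by
  rcases eq_or_ne w 0 with rfl | h
  · exact map_zero A
  · rcases hA w h with h0 | hlt
    · exact h0
    · omega

lemma degA_le {w : MvPolynomial (Fin N) ℝ} {m : ℕ} (hw : w.totalDegree ≤ m) :
    (A w).totalDegree ≤ m := by
  rcases eq_or_ne w 0 with rfl | h
  · simp
  · rcases hA w h with h0 | hlt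
    · simp [h0]
    · omega

lemma degA_lt {w : MvPolynomial (Fin N) ℝ} {m : ℕ} (hw : w.totalDegree ≤ m + 1) :
    (A w).totalDegree ≤ m := by
  rcases eq_or_ne w 0 with rfl | h
  · simp
  · rcases hA w h with h0 | hlt
    · simp [h0]
    · omega

lemma degApow_le (k : ℕ) {w : MvPolynomial (Fin N) ℝ} {m : ℕ} (hw : w.totalDegree ≤ m) :
    ((A ^ k) w).totalDegree ≤ m := by
  induction k generalizing w with
  | zero => simpa using hw
  | succ k ih =>
      rw [pow_succ, Module.End.mul_apply]
      exact ih (degA_le A hA hw)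

lemma degApow_lt {k : ℕ} (hk : 1 ≤ k) {w : MvPolynomial (Fin N) ℝ} {m : ℕ}
    (hw : w.totalDegree ≤ m + 1) : ((A ^ k) w).totalDegree ≤ m := by
  obtain ⟨k, rfl⟩ := Nat.exists_eq_add_of_le hk
  rw [add_comm, pow_add, pow_one, Module.End.mul_apply]
  exact degApow_le A hA k (degA_lt A hA hw)

lemma Apow_eq_zero {w : MvPolynomial (Fin N) ℝ} {n : ℕ} (h : w.totalDegree < n) :
    (A ^ n) w = 0 := by
  induction n generalizing w with
  | zero => omega
  | succ n ih =>
      rw [pow_succ, Module.End.mul_apply]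
      rcases eq_or_ne w 0 with rfl | h0
      · rw [map_zero, map_zero]
      · rcases hA w h0 with hz | hlt
        · rw [hz, map_zero]
        · exact ih (lt_of_lt_of_le hlt (Nat.lt_succ_iff.mp h))

set_option maxHeartbeats 1600000 in
theorem bwd
    (expA : ℝ → MvPolynomial (Fin N) ℝ → MvPolynomial (Fin N) ℝ)
    (hexpA : ∀ (t : ℝ) (p : MvPolynomial (Fin N) ℝ),
        expA t p = ∑ n ∈ Finset.range (p.totalDegree + 1),
          (t ^ n / (n.factorial : ℝ)) • ((A ^ n) p))
    (hmin : ∀ p : MvPolynomial (Fin N) ℝ, (∀ x : Fin N → ℝ, 0 ≤ MvPolynomial.eval x p) →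
        ∀ x₀ : Fin N → ℝ, MvPolynomial.eval x₀ p = 0 →
          0 ≤ MvPolynomial.eval x₀ (A p)) :
    ∀ t : ℝ, 0 ≤ t → ∀ p : MvPolynomial (Fin N) ℝ,
        (∀ x : Fin N → ℝ, 0 ≤ MvPolynomial.eval x p) →
        ∀ x : Fin N → ℝ, 0 ≤ MvPolynomial.eval x (expA t p) := by
  intro t ht p hp x
  set D := p.totalDegree with hD
  set s := D + 1 with hs
  set r : MvPolynomial (Fin N) ℝ := (1 + ∑ i, (X i) ^ 2) ^ s with hr
  have hr_eval : ∀ y : Fin N → ℝ, eval y r = Sg y ^ s := by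
    intro y
    rw [hr, map_pow, map_add, map_one, map_sum]
    simp [Sg]
  have hr_deg : r.totalDegree ≤ 2 * s := by
    have h1 : (∑ i : Fin N, (X i : MvPolynomial (Fin N) ℝ) ^ 2).totalDegree ≤ 2 :=
      le_trans (totalDegree_finset_sum _ _) (Finset.sup_le fun i _ =>
        le_trans (totalDegree_pow _ _) (by simp [totalDegree_X]))
    have h2 := totalDegree_add (1 : MvPolynomial (Fin N) ℝ) (∑ i, X i ^ 2)
    have h3 : (1 + ∑ i : Fin N, (X i : MvPolynomial (Fin N) ℝ) ^ 2).totalDegree ≤ 2 := by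
      simp only [totalDegree_one] at h2
      exact le_trans h2 (by simp [h1])
    calc r.totalDegree ≤ s * (1 + ∑ i : Fin N, (X i : MvPolynomial (Fin N) ℝ) ^ 2).totalDegree :=
          totalDegree_pow _ _
      _ ≤ s * 2 := Nat.mul_le_mul_left s h3
      _ = 2 * s := by ring
  -- the key per-ε claim
  have key : ∀ ε : ℝ, 0 < ε →
      0 ≤ eval x (expA t p) +
        ε * eval x (∑ n ∈ Finset.range (2*s+1), (t^n/(n.factorial:ℝ)) • ((A^n) r)) := by
    intro ε hε
    set q : MvPolynomial (Fin N) ℝ := p + ε • r with hq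
    have hq_deg : q.totalDegree ≤ 2*s := by
      refine le_trans (totalDegree_add _ _) (max_le (by omega) ?_)
      exact le_trans (totalDegree_smul_le _ _) hr_deg
    have heval_q : ∀ y : Fin N → ℝ, eval y q = eval y p + ε * Sg y ^ s := by
      intro y
      rw [hq, map_add, smul_eq_C_mul, eval_mul, eval_C, hr_eval]
    set f : ℝ → (Fin N → ℝ) → ℝ :=
      fun u y => ∑ n ∈ Finset.range (2*s+1), u^n/(n.factorial:ℝ) * eval y ((A^n) q) with hf
    set g : ℕ → MvPolynomial (Fin N) ℝ := fun n => if n = 0 then p else (A^n) q with hg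
    have hg_deg : ∀ n : ℕ, (g n).totalDegree ≤ 2*D+1 := by
      intro n
      have hgn : g n = if n = 0 then p else (A ^ n) q := rfl
      rw [hgn]
      split_ifs with h
      · omega
      · exact degApow_lt A hA (Nat.one_le_iff_ne_zero.mpr h)
          (le_trans hq_deg (by omega))
    have hfsplit : ∀ u : ℝ, ∀ y : Fin N → ℝ, f u y = ε * Sg y ^ s +
        ∑ n ∈ Finset.range (2*s+1), u^n/(n.factorial:ℝ) * eval y (g n) := by
      intro u y
      have hL : f u y = (∑ i ∈ Finset.range (2*s),
          u^(i+1)/((i+1).factorial:ℝ) * eval y ((A^(i+1)) q)) + eval y q := by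
        have hfa : f u y = ∑ n ∈ Finset.range (2*s+1),
            u^n/(n.factorial:ℝ) * eval y ((A^n) q) := rfl
        rw [hfa, Finset.sum_range_succ']
        simp
      have hR : (∑ n ∈ Finset.range (2*s+1), u^n/(n.factorial:ℝ) * eval y (g n)) =
          (∑ i ∈ Finset.range (2*s),
            u^(i+1)/((i+1).factorial:ℝ) * eval y ((A^(i+1)) q)) + eval y p := by
        rw [Finset.sum_range_succ']
        have hg0 : g 0 = p := by rw [hg]; simp
        have hgs : ∀ i : ℕ, g (i+1) = (A^(i+1)) q := fun i => by rw [hg]; simp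
        simp [hg0, hgs]
      rw [hL, hR, heval_q y]
      ring
    set CT : ℝ := ∑ n ∈ Finset.range (2*s+1), t^n/(n.factorial:ℝ) * csum (g n) with hCT
    have hCT0 : 0 ≤ CT := by
      refine Finset.sum_nonneg fun n _ => ?_
      exact mul_nonneg (div_nonneg (pow_nonneg ht n) (Nat.cast_nonneg _)) (csum_nonneg _)
    have hCTb : ∀ u : ℝ, u ∈ Icc 0 t → ∀ y : Fin N → ℝ,
        |∑ n ∈ Finset.range (2*s+1), u^n/(n.factorial:ℝ) * eval y (g n)| ≤
          CT * Real.sqrt (Sg y) ^ (2*D+1) := by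
      intro u hu y
      refine le_trans (Finset.abs_sum_le_sum_abs _ _) ?_
      rw [hCT, Finset.sum_mul]
      refine Finset.sum_le_sum fun n _ => ?_
      rw [abs_mul]
      have h1 : |u^n/(n.factorial:ℝ)| ≤ t^n/(n.factorial:ℝ) := by
        rw [abs_div, abs_pow, Nat.abs_cast, abs_of_nonneg hu.1]
        gcongr <;> first | exact hu.1 | exact hu.2
      have h2 : |eval y (g n)| ≤ csum (g n) * Real.sqrt (Sg y) ^ (2*D+1) :=
        evalBound (hg_deg n) y
      calc |u^n/(n.factorial:ℝ)| * |eval y (g n)|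
          ≤ (t^n/(n.factorial:ℝ)) * (csum (g n) * Real.sqrt (Sg y) ^ (2*D+1)) := by
            refine mul_le_mul h1 h2 (abs_nonneg _) ?_
            positivity
        _ = t^n/(n.factorial:ℝ) * csum (g n) * Real.sqrt (Sg y) ^ (2*D+1) := by ring
    have hout : ∀ u : ℝ, u ∈ Icc 0 t → ∀ y : Fin N → ℝ,
        CT < ε * Real.sqrt (Sg y) → 0 < f u y := by
      intro u hu y hy
      have hb := abs_le.mp (hCTb u hu y)
      rw [hfsplit u y]
      have hpows : Sg y ^ s = Real.sqrt (Sg y) ^ (2*D+1) * Real.sqrt (Sg y) := by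
        have h1 : Sg y ^ s = (Real.sqrt (Sg y) ^ 2) ^ s := by
          rw [Real.sq_sqrt (Sg_pos y).le]
        rw [h1, ← pow_mul, show 2*s = (2*D+1)+1 by omega, pow_succ]
      rw [hpows]
      have hP1 : 0 < Real.sqrt (Sg y) ^ (2*D+1) := pow_pos (sqrt_Sg_pos y) _
      nlinarith [hb.1, mul_pos (sub_pos.mpr hy) hP1]
    -- compact region
    set K : Set (Fin N → ℝ) := {y | Real.sqrt (Sg y) ≤ CT/ε} with hKdef
    have hRad : 0 ≤ CT/ε := div_nonneg hCT0 hε.le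
    have hKc : IsClosed K := isClosed_le (Real.continuous_sqrt.comp continuous_Sg)
      continuous_const
    have hKsub : K ⊆ Metric.closedBall 0 (CT/ε) := by
      intro y hy
      rw [Metric.mem_closedBall, dist_zero_right, pi_norm_le_iff_of_nonneg hRad]
      intro i
      exact le_trans (abs_le_sqrt_Sg y i) hy
    have hK : IsCompact K :=
      (isCompact_closedBall (0 : Fin N → ℝ) (CT/ε)).of_isClosed_subset hKc hKsub
    have hnotK : ∀ u ∈ Icc 0 t, ∀ y : Fin N → ℝ, y ∉ K → 0 < f u y := by
      intro u hu y hy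
      apply hout u hu y
      have h1 : CT/ε < Real.sqrt (Sg y) := lt_of_not_ge hy
      rw [div_lt_iff₀ hε] at h1
      linarith [h1]
    have hf_cont : Continuous fun z : ℝ × (Fin N → ℝ) => f z.1 z.2 := by
      have : (fun z : ℝ × (Fin N → ℝ) => f z.1 z.2) = fun z : ℝ × (Fin N → ℝ) =>
          ∑ n ∈ Finset.range (2*s+1), z.1^n/(n.factorial:ℝ) * eval z.2 ((A^n) q) := rfl
      rw [this]
      apply continuous_finset_sum
      intro n _
      exact ((continuous_fst.pow n).div_const _).mul
        ((MvPolynomial.continuous_eval (p := (A^n) q)).comp continuous_snd)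
    -- the first-touching-time argument
    have hdelta : ∀ δ : ℝ, 0 < δ → ∀ u ∈ Icc 0 t, ∀ y : Fin N → ℝ,
        0 < f u y + δ * Real.exp u := by
      intro δ hδ
      by_contra hcon
      push_neg at hcon
      obtain ⟨u₀, hu₀, y₀, hy₀⟩ := hcon
      set hh : ℝ × (Fin N → ℝ) → ℝ := fun z => f z.1 z.2 + δ * Real.exp z.1 with hhh
      have hh_cont : Continuous hh :=
        hf_cont.add (continuous_const.mul (Real.continuous_exp.comp continuous_fst))
      have hmemK : ∀ z : ℝ × (Fin N → ℝ), z.1 ∈ Icc 0 t → hh z ≤ 0 → z.2 ∈ K := by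
        intro z hz hle
        by_contra hzK
        have h1 := hnotK z.1 hz z.2 hzK
        have h2 := Real.exp_pos z.1
        have h3 : hh z = f z.1 z.2 + δ * Real.exp z.1 := rfl
        nlinarith
      set Cs : Set (ℝ × (Fin N → ℝ)) := (Icc 0 t ×ˢ K) ∩ {z | hh z ≤ 0} with hCsdef
      have hCs_cpt : IsCompact Cs :=
        (isCompact_Icc.prod hK).inter_right (isClosed_le hh_cont continuous_const)
      have hCs_ne : Cs.Nonempty :=
        ⟨(u₀, y₀), ⟨⟨hu₀, hmemK (u₀, y₀) hu₀ hy₀⟩, hy₀⟩⟩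
      set Z : Set ℝ := Prod.fst '' Cs with hZdef
      have hZ_cpt : IsCompact Z := hCs_cpt.image continuous_fst
      have hZ_ne : Z.Nonempty := hCs_ne.image _
      set t' : ℝ := sInf Z with ht'def
      have ht'Z : t' ∈ Z := hZ_cpt.sInf_mem hZ_ne
      obtain ⟨z0, hz0mem, hz0fst⟩ := ht'Z
      have hz0eq : z0 = (t', z0.2) := by
        rw [← hz0fst]
      rw [hz0eq] at hz0mem
      set y' : Fin N → ℝ := z0.2 with hy'def
      have ht'Icc : t' ∈ Icc 0 t := hz0mem.1.1
      have hy'le : hh (t', y') ≤ 0 := hz0mem.2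
      have hbefore : ∀ u : ℝ, 0 ≤ u → u < t' → ∀ y : Fin N → ℝ, 0 < hh (u, y) := by
        intro u hu0 hut y
        by_contra hle
        push_neg at hle
        have huIcc : u ∈ Icc 0 t := ⟨hu0, le_trans hut.le ht'Icc.2⟩
        have hyK : y ∈ K := hmemK (u, y) huIcc hle
        have huZ : u ∈ Z := ⟨(u, y), ⟨⟨huIcc, hyK⟩, hle⟩, rfl⟩
        have := csInf_le hZ_cpt.bddBelow huZ
        rw [← ht'def] at this
        linarith
      have hf0 : ∀ y : Fin N → ℝ, f 0 y = eval y q := by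
        intro y
        have hfa : f 0 y = ∑ n ∈ Finset.range (2*s+1),
            (0:ℝ)^n/(n.factorial:ℝ) * eval y ((A^n) q) := rfl
        rw [hfa, Finset.sum_range_succ']
        simp [pow_succ, Module.End.one_apply]
      have ht'pos : 0 < t' := by
        rcases lt_or_eq_of_le ht'Icc.1 with h | h
        · exact h
        · exfalso
          have h1 : hh (0, y') = eval y' q + δ := by
            have : hh (0, y') = f 0 y' + δ * Real.exp 0 := rfl
            rw [this, hf0, Real.exp_zero, mul_one]
          have h2 : 0 < eval y' q := by
            rw [heval_q y']
            have := hp y'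
            have h3 : 0 < Sg y' ^ s := pow_pos (Sg_pos y') s
            nlinarith
          rw [← h] at hy'le
          rw [h1] at hy'le
          linarith
      have hge : ∀ y : Fin N → ℝ, 0 ≤ hh (t', y) := by
        intro y
        have hcy : Tendsto (fun u => hh (u, y)) (𝓝[<] t') (𝓝 (hh (t', y))) := by
          have : Continuous fun u : ℝ => hh (u, y) :=
            hh_cont.comp (continuous_id.prodMk continuous_const)
          exact (this.tendsto t').mono_left nhdsWithin_le_nhds
        refine ge_of_tendsto hcy ?_
        filter_upwards [Ioo_mem_nhdsLT ht'pos] with u hu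
        exact (hbefore u hu.1.le hu.2 y).le
      have heqz : hh (t', y') = 0 := le_antisymm hy'le (hge y')
      -- apply the positive minimum principle
      set P : MvPolynomial (Fin N) ℝ :=
        (∑ n ∈ Finset.range (2*s+1), (t'^n/(n.factorial:ℝ)) • ((A^n) q)) +
          C (δ * Real.exp t') with hPdef
      have hPeval : ∀ y : Fin N → ℝ, eval y P = hh (t', y) := by
        intro y
        have h1 : hh (t', y) = (∑ n ∈ Finset.range (2*s+1),
            t'^n/(n.factorial:ℝ) * eval y ((A^n) q)) + δ * Real.exp t' := rfl
        rw [h1, hPdef, map_add, map_sum, eval_C]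
        congr 1
        exact Finset.sum_congr rfl fun n _ => by
          rw [smul_eq_C_mul, eval_mul, eval_C]
      have hposP : ∀ y : Fin N → ℝ, 0 ≤ eval y P := by
        intro y; rw [hPeval]; exact hge y
      have hPz : eval y' P = 0 := by rw [hPeval]; exact heqz
      have hAP := hmin P hposP y' hPz
      have hAPval : eval y' (A P) = ∑ n ∈ Finset.range (2*s+1),
          t'^n/(n.factorial:ℝ) * eval y' ((A^(n+1)) q) := by
        rw [hPdef, map_add, degA_zero A hA (totalDegree_C _), add_zero, map_sum, map_sum]
        refine Finset.sum_congr rfl fun n _ => ?_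
        rw [_root_.map_smul, smul_eq_C_mul, eval_mul, eval_C]
        congr 2
        rw [pow_succ', Module.End.mul_apply]
      set d : ℝ := (∑ n ∈ Finset.range (2*s+1),
          t'^n/(n.factorial:ℝ) * eval y' ((A^(n+1)) q)) + δ * Real.exp t' with hddef
      have hder : HasDerivAt (fun u => hh (u, y')) d t' := by
        have h1 : ∀ n : ℕ, HasDerivAt
            (fun u : ℝ => u^n/(n.factorial:ℝ) * eval y' ((A^n) q))
            ((n:ℝ) * t'^(n-1)/(n.factorial:ℝ) * eval y' ((A^n) q)) t' :=
          fun n => ((hasDerivAt_pow n t').div_const _).mul_const _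
        have hsum := HasDerivAt.sum (fun n (_ : n ∈ Finset.range (2*s+1)) => h1 n)
        have hexp := (Real.hasDerivAt_exp t').const_mul δ
        have hcomb := hsum.add hexp
        have hval : (∑ n ∈ Finset.range (2*s+1),
            (n:ℝ) * t'^(n-1)/(n.factorial:ℝ) * eval y' ((A^n) q)) + δ * Real.exp t' = d := by
          rw [hddef]
          congr 1
          rw [Finset.sum_range_succ' (fun n => (n:ℝ) * t'^(n-1)/(n.factorial:ℝ) *
            eval y' ((A^n) q)), Finset.sum_range_succ]
          have hlast : (A^(2*s+1)) q = 0 :=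
            Apow_eq_zero A hA (lt_of_le_of_lt hq_deg (Nat.lt_succ_self _))
          rw [hlast]
          simp only [map_zero, eval_zero, mul_zero, add_zero, Nat.cast_zero, zero_mul,
            zero_div]
          refine Finset.sum_congr rfl fun i _ => ?_
          simp only [Nat.add_sub_cancel]
          have hfac : ((i+1).factorial : ℝ) = (i+1) * (i.factorial : ℝ) := by
            rw [Nat.factorial_succ]; push_cast; ring
          rw [hfac]
          have hip : ((i:ℝ)+1) ≠ 0 := by positivity
          have hif : (i.factorial : ℝ) ≠ 0 := Nat.cast_ne_zero.mpr i.factorial_ne_zero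
          field_simp
          push_cast
          ring
        rw [← hval]
        refine hcomb.congr_of_eventuallyEq (Filter.Eventually.of_forall fun u => ?_)
        simp only [Pi.add_apply, Finset.sum_apply]
        rfl
      have hdpos : 0 < d := by
        have h2 : 0 ≤ ∑ n ∈ Finset.range (2*s+1),
            t'^n/(n.factorial:ℝ) * eval y' ((A^(n+1)) q) := by
          rw [← hAPval]; exact hAP
        have h3 := Real.exp_pos t'
        rw [hddef]
        have h4 := mul_pos hδ h3
        linarith
      have hdnonpos : d ≤ 0 := by
        have hslope := hasDerivAt_iff_tendsto_slope.mp hder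
        have hsub : Iio t' ⊆ {t'}ᶜ := fun u (hu : u ∈ Iio t') => ne_of_lt hu
        have hslope' := hslope.mono_left (nhdsWithin_mono t' hsub)
        refine le_of_tendsto hslope' ?_
        filter_upwards [Ioo_mem_nhdsLT ht'pos] with u hu
        have h1 : 0 < hh (u, y') := hbefore u hu.1.le hu.2 y'
        have h2 : u - t' < 0 := sub_neg.mpr hu.2
        rw [slope_def_field]
        apply div_nonpos_of_nonneg_of_nonpos
        · show (0:ℝ) ≤ hh (u, y') - hh (t', y')
          rw [heqz]; linarith
        · linarith
      linarith
    -- let δ → 0 at (t, x)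
    have hfx : 0 ≤ f t x := by
      by_contra hneg
      push_neg at hneg
      have hexpt := Real.exp_pos t
      have hδ : 0 < -(f t x) / (2 * Real.exp t) :=
        div_pos (neg_pos.mpr hneg) (by positivity)
      have := hdelta _ hδ t ⟨ht, le_refl t⟩ x
      rw [div_mul_eq_mul_div, mul_comm] at this
      have h2 : Real.exp t * -(f t x) / (2 * Real.exp t) = -(f t x)/2 := by
        field_simp
      rw [h2] at this
      linarith
    -- identify f t x
    have htrunc : expA t p = ∑ n ∈ Finset.range (2*s+1), (t^n/(n.factorial:ℝ)) • ((A^n) p) := by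
      rw [hexpA]
      refine Finset.sum_subset (Finset.range_subset_range.mpr (by omega)) ?_
      intro n _ hn
      rw [Finset.mem_range, not_lt] at hn
      rw [Apow_eq_zero A hA (by omega), smul_zero]
    have hsplit2 : f t x = eval x (expA t p) +
        ε * eval x (∑ n ∈ Finset.range (2*s+1), (t^n/(n.factorial:ℝ)) • ((A^n) r)) := by
      have hfa : f t x = ∑ n ∈ Finset.range (2*s+1),
          t^n/(n.factorial:ℝ) * eval x ((A^n) q) := rfl
      rw [hfa, htrunc, map_sum, map_sum, Finset.mul_sum, ← Finset.sum_add_distrib]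
      refine Finset.sum_congr rfl fun n _ => ?_
      have hqn : (A^n) q = (A^n) p + ε • ((A^n) r) := by
        rw [hq, map_add, _root_.map_smul]
      rw [hqn]
      simp only [map_add, smul_eq_C_mul, eval_mul, eval_C]
      ring
    rw [hsplit2] at hfx
    exact hfx
  -- let ε → 0
  by_contra hneg
  push_neg at hneg
  set u : ℝ := eval x (expA t p) with hu
  set v : ℝ := eval x (∑ n ∈ Finset.range (2*s+1), (t^n/(n.factorial:ℝ)) • ((A^n) r)) with hv
  have hεpos : 0 < -u / (2*(|v|+1)) :=
    div_pos (neg_pos.mpr hneg) (by positivity)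
  have hkey := key _ hεpos
  have habs1 : (-u / (2*(|v|+1))) * v ≤ (-u / (2*(|v|+1))) * |v| :=
    mul_le_mul_of_nonneg_left (le_abs_self v) hεpos.le
  have habs2 : (-u / (2*(|v|+1))) * |v| ≤ -u/2 := by
    rw [div_mul_eq_mul_div, div_le_div_iff₀ (by positivity) (by norm_num)]
    have h0 : 0 ≤ |v| := abs_nonneg v
    nlinarith
  linarith

theorem fwd
    (expA : ℝ → MvPolynomial (Fin N) ℝ → MvPolynomial (Fin N) ℝ)
    (hexpA : ∀ (t : ℝ) (p : MvPolynomial (Fin N) ℝ),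
        expA t p = ∑ n ∈ Finset.range (p.totalDegree + 1),
          (t ^ n / (n.factorial : ℝ)) • ((A ^ n) p))
    (hpos : ∀ t : ℝ, 0 ≤ t → ∀ p : MvPolynomial (Fin N) ℝ,
        (∀ x : Fin N → ℝ, 0 ≤ MvPolynomial.eval x p) →
        ∀ x : Fin N → ℝ, 0 ≤ MvPolynomial.eval x (expA t p)) :
    (∀ p : MvPolynomial (Fin N) ℝ, (∀ x : Fin N → ℝ, 0 ≤ MvPolynomial.eval x p) →
        ∀ x₀ : Fin N → ℝ, MvPolynomial.eval x₀ p = 0 →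
          0 ≤ MvPolynomial.eval x₀ (A p)) := by
  intro p hp x₀ hx0
  rcases eq_or_ne p 0 with rfl | hp0
  · simp
  rcases Nat.eq_zero_or_pos p.totalDegree with hD0 | hD1
  · rw [degA_zero A hA hD0]; simp
  set D := p.totalDegree with hD
  set c : ℕ → ℝ := fun n => eval x₀ ((A ^ n) p) with hc
  have hc0 : c 0 = 0 := by simp [hc, hx0]
  have heval : ∀ t : ℝ, eval x₀ (expA t p) = ∑ n ∈ Finset.range (D + 1),
      t ^ n / (n.factorial : ℝ) * c n := by
    intro t
    rw [hexpA, map_sum]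
    exact Finset.sum_congr rfl fun n _ => by rw [smul_eq_C_mul, eval_mul, eval_C]
  set ψ : ℝ → ℝ := fun t => ∑ m ∈ Finset.range D, t ^ m * (c (m + 1) / ((m + 1).factorial : ℝ))
    with hψdef
  have hψ : ∀ t : ℝ, eval x₀ (expA t p) = t * ψ t := by
    intro t
    rw [heval, Finset.sum_range_succ']
    simp only [hc0, pow_zero, Nat.factorial_zero, mul_zero, add_zero]
    rw [hψdef, Finset.mul_sum]
    exact Finset.sum_congr rfl fun m _ => by rw [pow_succ]; ring
  have hψ0 : ψ 0 = c 1 := by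
    have he : ψ 0 = ∑ m ∈ Finset.range D, (0:ℝ) ^ m * (c (m + 1) / ((m + 1).factorial : ℝ)) := rfl
    rw [he, Finset.sum_eq_single_of_mem 0 (Finset.mem_range.mpr hD1)]
    · simp
    · intro m _ hm
      simp [zero_pow hm]
  have hcont : Continuous ψ := by
    apply continuous_finset_sum
    exact fun m _ => (continuous_pow m).mul continuous_const
  by_contra hneg
  push_neg at hneg
  have hc1 : ψ 0 < 0 := by rw [hψ0]; simpa [hc] using hneg
  have hmem : ψ ⁻¹' (Set.Iio 0) ∈ 𝓝 (0:ℝ) := (hcont.tendsto 0) (Iio_mem_nhds hc1)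
  have hmem' : ψ ⁻¹' (Set.Iio 0) ∈ 𝓝[>] (0:ℝ) := mem_nhdsWithin_of_mem_nhds hmem
  have hand := Filter.Eventually.and hmem' (self_mem_nhdsWithin (s := Set.Ioi (0:ℝ)))
  obtain ⟨t, ht1, ht2⟩ := hand.exists
  have hcontra := hpos t (le_of_lt ht2) p hp x₀
  rw [hψ] at hcontra
  have : t * ψ t < 0 := mul_neg_of_pos_of_neg ht2 ht1
  linarith


end PMPaux


/-- (Positive minimum principle for degree-lowering operators)
Let `A` be a degree-lowering linear operator on the real polynomials, so that
`e^{tA}` is defined on each polynomial by a terminating power series. Then `e^{tA}`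
is positivity-preserving for all `t ≥ 0` iff `A` satisfies the positive minimum
principle: `p ≥ 0` and `p(x₀) = 0` imply `(Ap)(x₀) ≥ 0`. -/
theorem expA_positive_iff_positive_minimum_principle {N : ℕ} (hN : 1 ≤ N)
    (A : Module.End ℝ (MvPolynomial (Fin N) ℝ))
    (hA : ∀ p : MvPolynomial (Fin N) ℝ, p ≠ 0 →
        A p = 0 ∨ (A p).totalDegree < p.totalDegree)
    (expA : ℝ → MvPolynomial (Fin N) ℝ → MvPolynomial (Fin N) ℝ)
    (hexpA : ∀ (t : ℝ) (p : MvPolynomial (Fin N) ℝ),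
        expA t p = ∑ n ∈ Finset.range (p.totalDegree + 1),
          (t ^ n / (n.factorial : ℝ)) • ((A ^ n) p)) :
    (∀ t : ℝ, 0 ≤ t → ∀ p : MvPolynomial (Fin N) ℝ,
        (∀ x : Fin N → ℝ, 0 ≤ MvPolynomial.eval x p) →
        ∀ x : Fin N → ℝ, 0 ≤ MvPolynomial.eval x (expA t p)) ↔
    (∀ p : MvPolynomial (Fin N) ℝ, (∀ x : Fin N → ℝ, 0 ≤ MvPolynomial.eval x p) →
        ∀ x₀ : Fin N → ℝ, MvPolynomial.eval x₀ p = 0 →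
          0 ≤ MvPolynomial.eval x₀ (A p)) := by
  constructor
  · intro hpos
    exact PMPaux.fwd A hA expA hexpA hpos
  · intro hmin t ht p hp x
    exact PMPaux.bwd A hA expA hexpA hmin t ht p hp x
end

section
/- (Positivity of Dunkl's intertwining operator) Let k ≥ 0. If p ∈ Π satisfies p(x) ≥ 0 for all x ∈ ℝ^N, then V_k p(x) ≥ 0 for all x ∈ ℝ^N. -/
open scoped RealInnerProductSpace BigOperators
open MeasureTheory Filter

noncomputable section Aux
open MvPolynomial

namespace DunklAux

variable {N : ℕ}

/-- Explicit derivative of `polyFun q` at `x`, as a continuous linear map. -/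
def polyCLM (q : MvPolynomial (Fin N) ℂ) (x : Vec N) : Vec N →L[ℝ] ℂ :=
  ∑ j : Fin N, polyFun (MvPolynomial.pderiv j q) x •
    (Complex.ofRealCLM.comp (EuclideanSpace.proj j))

lemma polyCLM_apply (q : MvPolynomial (Fin N) ℂ) (x ξ : Vec N) :
    polyCLM q x ξ = ∑ j : Fin N, polyFun (MvPolynomial.pderiv j q) x * ((ξ j : ℝ) : ℂ) := by
  simp [polyCLM, ContinuousLinearMap.sum_apply, smul_eq_mul]

lemma polyFun_C (a : ℂ) : (polyFun (C a) : Vec N → ℂ) = fun _ => a := by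
  funext x; simp [polyFun]

lemma polyFun_add (q r : MvPolynomial (Fin N) ℂ) (x : Vec N) :
    polyFun (q + r) x = polyFun q x + polyFun r x := by simp [polyFun]

lemma polyFun_mul (q r : MvPolynomial (Fin N) ℂ) (x : Vec N) :
    polyFun (q * r) x = polyFun q x * polyFun r x := by simp [polyFun]

lemma polyFun_smul (a : ℂ) (q : MvPolynomial (Fin N) ℂ) (x : Vec N) :
    polyFun (a • q) x = a * polyFun q x := by
  simp [polyFun, MvPolynomial.smul_eq_C_mul]

lemma polyFun_X (j : Fin N) (x : Vec N) : polyFun (X j : MvPolynomial (Fin N) ℂ) x = ((x j : ℝ) : ℂ) := by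
  simp [polyFun]

lemma polyFun_hasFDerivAt (q : MvPolynomial (Fin N) ℂ) (x : Vec N) :
    HasFDerivAt (polyFun q) (polyCLM q x) x := by
  induction q using MvPolynomial.induction_on with
  | C a =>
      have h0 : polyCLM (C a) x = 0 := by
        ext ξ; simp [polyCLM_apply, polyFun, MvPolynomial.pderiv_C]
      rw [polyFun_C, h0]; exact hasFDerivAt_const _ _
  | add p q hp hq =>
      have : (polyFun (p + q) : Vec N → ℂ) = fun z => polyFun p z + polyFun q z := by
        funext z; exact polyFun_add p q z
      rw [this]
      have h0 : polyCLM (p + q) x = polyCLM p x + polyCLM q x := by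
        ext ξ; simp [polyCLM_apply, map_add, polyFun_add, Finset.sum_add_distrib, add_mul]
      rw [h0]; exact hp.add hq
  | mul_X p n hp =>
      have hfun : (polyFun (p * X n) : Vec N → ℂ) = fun z => polyFun p z * ((z n : ℝ) : ℂ) := by
        funext z; rw [polyFun_mul, polyFun_X]
      have hcoord : HasFDerivAt (fun z : Vec N => ((z n : ℝ) : ℂ))
          (Complex.ofRealCLM.comp (EuclideanSpace.proj n)) x :=
        (Complex.ofRealCLM.comp (EuclideanSpace.proj n)).hasFDerivAt
      have hmul := hp.mul hcoord
      have h0 : polyCLM (p * X n) x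
          = polyFun p x • (Complex.ofRealCLM.comp (EuclideanSpace.proj n))
            + ((x n : ℝ) : ℂ) • polyCLM p x := by
        ext ξ
        simp only [polyCLM_apply, ContinuousLinearMap.add_apply, ContinuousLinearMap.smul_apply,
          ContinuousLinearMap.comp_apply, Complex.ofRealCLM_apply, smul_eq_mul,
          MvPolynomial.pderiv_mul, MvPolynomial.pderiv_X]
        have hproj : ((EuclideanSpace.proj n) ξ : ℝ) = ξ n := rfl
        rw [hproj]
        have hterm : ∀ j : Fin N,
            polyFun ((pderiv j) p * X n + p * (Pi.single j (1 : MvPolynomial (Fin N) ℂ) : Fin N → MvPolynomial (Fin N) ℂ) n) x * ((ξ j : ℝ) : ℂ)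
            = polyFun ((pderiv j) p) x * ((x n : ℝ) : ℂ) * ((ξ j : ℝ) : ℂ)
              + (if j = n then polyFun p x * ((ξ j : ℝ) : ℂ) else 0) := by
          intro j
          rw [polyFun_add, polyFun_mul, polyFun_mul, polyFun_X]
          by_cases h : j = n
          · subst h
            rw [if_pos rfl, Pi.single_eq_same]
            have h1 : polyFun (1 : MvPolynomial (Fin N) ℂ) x = 1 := by simp [polyFun]
            rw [h1]; ring
          · rw [if_neg h, Pi.single_eq_of_ne (fun hh => h hh.symm)]
            have h1 : polyFun (0 : MvPolynomial (Fin N) ℂ) x = 0 := by simp [polyFun]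
            rw [h1]; ring
        rw [Finset.sum_congr rfl (fun j _ => hterm j), Finset.sum_add_distrib,
          Finset.sum_ite_eq' Finset.univ n (fun j => polyFun p x * ((ξ j : ℝ) : ℂ))]
        simp only [Finset.mem_univ, if_pos]
        rw [Finset.mul_sum]
        rw [Finset.sum_congr rfl (fun j _ => show
          polyFun ((pderiv j) p) x * ((x n : ℝ) : ℂ) * ((ξ j : ℝ) : ℂ)
          = ((x n : ℝ) : ℂ) * (polyFun ((pderiv j) p) x * ((ξ j : ℝ) : ℂ)) from by ring)]
        ring
      rw [hfun, h0]; exact hmul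

end DunklAux

end Aux

namespace DunklAux
open MvPolynomial

variable {N : ℕ}

lemma polyFun_continuous (q : MvPolynomial (Fin N) ℂ) : Continuous (polyFun q) :=
  continuous_iff_continuousAt.2 fun x => (polyFun_hasFDerivAt q x).continuousAt

lemma fderiv_polyFun (q : MvPolynomial (Fin N) ℂ) (x : Vec N) :
    fderiv ℝ (polyFun q) x = polyCLM q x := (polyFun_hasFDerivAt q x).fderiv

lemma polyFun_sum {ι : Type*} (s : Finset ι) (f : ι → MvPolynomial (Fin N) ℂ) (x : Vec N) :
    polyFun (∑ i ∈ s, f i) x = ∑ i ∈ s, polyFun (f i) x := by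
  simp [polyFun]

lemma polyCLM_eq_pderivDir (q : MvPolynomial (Fin N) ℂ) (x ξ : Vec N) :
    polyCLM q x ξ = polyFun (pderivDir ξ q) x := by
  rw [polyCLM_apply, pderivDir, polyFun_sum]
  exact Finset.sum_congr rfl fun j _ => by rw [polyFun_smul]; ring

lemma pderivDir_add (ξ : Vec N) (p q : MvPolynomial (Fin N) ℂ) :
    pderivDir ξ (p + q) = pderivDir ξ p + pderivDir ξ q := by
  simp [pderivDir, map_add, smul_add, Finset.sum_add_distrib]

lemma pderivDir_smul (ξ : Vec N) (a : ℂ) (p : MvPolynomial (Fin N) ℂ) :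
    pderivDir ξ (a • p) = a • pderivDir ξ p := by
  rw [pderivDir, pderivDir, Finset.smul_sum]
  refine Finset.sum_congr rfl fun j _ => ?_
  rw [Derivation.map_smul, smul_comm]

lemma pderivDir_sum {ι : Type*} (ξ : Vec N) (s : Finset ι) (f : ι → MvPolynomial (Fin N) ℂ) :
    pderivDir ξ (∑ i ∈ s, f i) = ∑ i ∈ s, pderivDir ξ (f i) := by
  classical
  induction s using Finset.induction_on with
  | empty => simp [pderivDir]
  | insert a s h ih => rw [Finset.sum_insert h, Finset.sum_insert h, pderivDir_add, ih]

lemma pderivDir_mul (ξ : Vec N) (p q : MvPolynomial (Fin N) ℂ) :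
    pderivDir ξ (p * q) = pderivDir ξ p * q + p * pderivDir ξ q := by
  simp only [pderivDir, MvPolynomial.pderiv_mul, smul_add, Finset.sum_add_distrib,
    Finset.sum_mul, Finset.mul_sum, smul_mul_assoc, mul_smul_comm]

lemma pderivDir_C (ξ : Vec N) (a : ℂ) : pderivDir ξ (C a : MvPolynomial (Fin N) ℂ) = 0 := by
  simp [pderivDir, MvPolynomial.pderiv_C]

lemma pderivDir_one (ξ : Vec N) : pderivDir ξ (1 : MvPolynomial (Fin N) ℂ) = 0 := by
  simpa using pderivDir_C ξ 1

lemma pderivDir_X (ξ : Vec N) (j : Fin N) :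
    pderivDir ξ (X j : MvPolynomial (Fin N) ℂ) = C ((ξ j : ℝ) : ℂ) := by
  classical
  rw [pderivDir]
  have hterm : ∀ i : Fin N,
      (((ξ i : ℝ) : ℂ)) • (MvPolynomial.pderiv i) (X j : MvPolynomial (Fin N) ℂ)
      = if i = j then C ((ξ i : ℝ) : ℂ) else 0 := by
    intro i
    rw [MvPolynomial.pderiv_X]
    by_cases h : i = j
    · subst h; rw [Pi.single_eq_same, if_pos rfl, MvPolynomial.smul_eq_C_mul, mul_one]
    · rw [Pi.single_eq_of_ne (fun hh => h hh.symm), if_neg h, smul_zero]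
  rw [Finset.sum_congr rfl fun i _ => hterm i,
    Finset.sum_ite_eq' Finset.univ j (fun i => C ((ξ i : ℝ) : ℂ))]
  simp

lemma norm_reflect (α x : Vec N) (h2 : ⟪α, α⟫ = (2:ℝ)) :
    ‖x - ⟪α, x⟫ • α‖ = ‖x‖ := by
  have hα : ‖α‖ ^ 2 = 2 := by rw [← real_inner_self_eq_norm_sq]; exact h2
  have hsq : ‖x - ⟪α, x⟫ • α‖ ^ 2 = ‖x‖ ^ 2 := by
    rw [norm_sub_sq_real, real_inner_smul_right, norm_smul]
    rw [mul_pow, real_inner_comm x α]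
    simp only [Real.norm_eq_abs, sq_abs]
    rw [hα]
    ring
  have h1 := congrArg Real.sqrt hsq
  rwa [Real.sqrt_sq (norm_nonneg _), Real.sqrt_sq (norm_nonneg _)] at h1

lemma polyFun_zero_eq (q : MvPolynomial (Fin N) ℂ) :
    polyFun q (0 : Vec N) = MvPolynomial.coeff 0 q := by
  have : (fun i => (((0 : Vec N) i : ℝ) : ℂ)) = (0 : Fin N → ℂ) := by
    funext i; simp
  rw [polyFun, this, MvPolynomial.eval_zero]
  rfl

lemma polyFun_V_zero (V : MvPolynomial (Fin N) ℂ ≃ₗ[ℂ] MvPolynomial (Fin N) ℂ)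
    (hV1 : ∀ n : ℕ, Submodule.map (V : MvPolynomial (Fin N) ℂ →ₗ[ℂ] MvPolynomial (Fin N) ℂ)
      (MvPolynomial.homogeneousSubmodule (Fin N) ℂ n) = MvPolynomial.homogeneousSubmodule (Fin N) ℂ n)
    (hV2 : ∀ c : ℂ, V (MvPolynomial.C c) = MvPolynomial.C c)
    (q : MvPolynomial (Fin N) ℂ) :
    polyFun (V q) 0 = polyFun q 0 := by
  classical
  have hdec := MvPolynomial.sum_homogeneousComponent q
  have key : ∀ n : ℕ, polyFun (V (MvPolynomial.homogeneousComponent n q)) 0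
      = polyFun (MvPolynomial.homogeneousComponent n q) 0 := by
    intro n
    rcases Nat.eq_zero_or_pos n with hn | hn
    · subst hn
      rw [MvPolynomial.homogeneousComponent_zero, hV2]
    · have hmem : MvPolynomial.homogeneousComponent n q ∈ MvPolynomial.homogeneousSubmodule (Fin N) ℂ n :=
        (MvPolynomial.mem_homogeneousSubmodule _ _).2 (MvPolynomial.homogeneousComponent_isHomogeneous n q)
      have hVmem : V (MvPolynomial.homogeneousComponent n q) ∈ MvPolynomial.homogeneousSubmodule (Fin N) ℂ n := by
        rw [← hV1 n]
        exact Submodule.mem_map_of_mem hmem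
      have h1 : (V (MvPolynomial.homogeneousComponent n q)).IsHomogeneous n :=
        (MvPolynomial.mem_homogeneousSubmodule _ _).1 hVmem
      have h2 : (MvPolynomial.homogeneousComponent n q).IsHomogeneous n :=
        MvPolynomial.homogeneousComponent_isHomogeneous n q
      have hd : (0 : Fin N →₀ ℕ).degree ≠ n := by
        simp only [map_zero]
        omega
      rw [polyFun_zero_eq, polyFun_zero_eq, h1.coeff_eq_zero hd, h2.coeff_eq_zero hd]
  calc polyFun (V q) 0
      = polyFun (V (∑ n ∈ Finset.range (q.totalDegree + 1), MvPolynomial.homogeneousComponent n q)) 0 := by rw [hdec]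
    _ = ∑ n ∈ Finset.range (q.totalDegree + 1), polyFun (V (MvPolynomial.homogeneousComponent n q)) 0 := by
        rw [map_sum, polyFun_sum]
    _ = ∑ n ∈ Finset.range (q.totalDegree + 1), polyFun (MvPolynomial.homogeneousComponent n q) 0 :=
        Finset.sum_congr rfl fun n _ => key n
    _ = polyFun q 0 := by rw [← polyFun_sum, hdec]

lemma dunkl_integral_eq (q : MvPolynomial (Fin N) ℂ) (x α : Vec N) (hc : ⟪α, x⟫ ≠ (0:ℝ)) :
    (∫ t in (0:ℝ)..(1:ℝ), fderiv ℝ (polyFun q) (x - (t * ⟪α, x⟫) • α) α)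
      = (polyFun q x - polyFun q (x - ⟪α, x⟫ • α)) / ((⟪α, x⟫ : ℝ) : ℂ) := by
  set c : ℝ := ⟪α, x⟫ with hcdef
  have hcC : ((c : ℝ) : ℂ) ≠ 0 := Complex.ofReal_ne_zero.2 hc
  have hpath : ∀ t : ℝ, HasDerivAt (fun s : ℝ => x - (s * c) • α) (-(c • α)) t := by
    intro t
    have h1 : HasDerivAt (fun s : ℝ => (s * c) • α) (c • α) t := by
      have := ((hasDerivAt_id t).mul_const c).smul_const α
      simpa using this
    simpa using h1.const_sub x
  have hG : ∀ t : ℝ, HasDerivAt (fun s : ℝ => -(polyFun q (x - (s * c) • α)) * (((c:ℝ):ℂ))⁻¹)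
      (fderiv ℝ (polyFun q) (x - (t * c) • α) α) t := by
    intro t
    have hg : HasDerivAt (fun s : ℝ => polyFun q (x - (s * c) • α))
        (polyCLM q (x - (t * c) • α) (-(c • α))) t :=
      (polyFun_hasFDerivAt q _).comp_hasDerivAt t (hpath t)
    have := (hg.neg).mul_const (((c:ℝ):ℂ))⁻¹
    refine this.congr_deriv ?_
    rw [fderiv_polyFun]
    rw [(polyCLM q (x - (t * c) • α)).map_neg, (polyCLM q (x - (t * c) • α)).map_smul]
    field_simp
    rw [Complex.real_smul]
  have hcont : Continuous fun t : ℝ => fderiv ℝ (polyFun q) (x - (t * c) • α) α := by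
    have h1 : Continuous fun t : ℝ => x - (t * c) • α := by
      apply Continuous.sub continuous_const
      exact (continuous_id.mul continuous_const).smul continuous_const
    have h2 : (fun t : ℝ => fderiv ℝ (polyFun q) (x - (t * c) • α) α)
        = fun t : ℝ => polyFun (pderivDir α q) (x - (t * c) • α) := by
      funext t; rw [fderiv_polyFun, polyCLM_eq_pderivDir]
    rw [h2]
    exact (polyFun_continuous _).comp h1
  rw [intervalIntegral.integral_eq_sub_of_hasDerivAt (fun t _ => hG t)
    (hcont.intervalIntegrable 0 1)]
  simp only [one_mul, zero_mul, zero_smul, sub_zero]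
  field_simp
  ring

end DunklAux

noncomputable section
namespace DunklAux
open MvPolynomial

variable {N : ℕ}

/-- Monomial function of `y`. -/
def monC (c : Fin N → ℕ) (y : Vec N) : ℂ := ∏ i : Fin N, ((y i : ℝ) : ℂ) ^ (c i)

/-- Exponent decreased by one in coordinate `j`. -/
def subd (c : Fin N → ℕ) (j : Fin N) : Fin N → ℕ := fun i => if i = j then c i - 1 else c i

/-- Formal directional derivative of the monomial function. -/
def dmonC (c : Fin N → ℕ) (ξ y : Vec N) : ℂ :=
  ∑ j : Fin N, ((ξ j : ℝ) : ℂ) * (c j : ℂ) * monC (subd c j) y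

lemma monC_zero (y : Vec N) : monC (fun _ => 0) y = 1 := by simp [monC]

lemma monC_add (c c' : Fin N → ℕ) (y : Vec N) :
    monC (fun i => c i + c' i) y = monC c y * monC c' y := by
  simp [monC, pow_add, Finset.prod_mul_distrib]

lemma monC_single (j : Fin N) (y : Vec N) :
    monC (fun i => if i = j then 1 else 0) y = ((y j : ℝ) : ℂ) := by
  rw [monC]
  rw [Finset.prod_congr rfl (fun i (_ : i ∈ Finset.univ) =>
    show ((y i : ℝ) : ℂ) ^ (if i = j then 1 else 0)
      = if i = j then ((y i : ℝ) : ℂ) else 1 from by by_cases h : i = j <;> simp [h])]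
  rw [Finset.prod_ite_eq' Finset.univ j (fun i => ((y i : ℝ) : ℂ))]
  simp

lemma dmonC_zero (ξ y : Vec N) : dmonC (fun _ => 0) ξ y = 0 := by simp [dmonC]

lemma dmonC_single (j : Fin N) (ξ y : Vec N) :
    dmonC (fun i => if i = j then 1 else 0) ξ y = ((ξ j : ℝ) : ℂ) := by
  rw [dmonC]
  have hterm : ∀ i : Fin N,
      ((ξ i : ℝ) : ℂ) * (((if i = j then 1 else 0 : ℕ)) : ℂ)
        * monC (subd (fun i' => if i' = j then 1 else 0) i) y
      = if i = j then ((ξ i : ℝ) : ℂ) else 0 := by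
    intro i
    by_cases h : i = j
    · subst h
      have hs : subd (fun i' => if i' = i then 1 else 0) i = fun _ => 0 := by
        funext i'; simp only [subd]; by_cases h' : i' = i <;> simp [h']
      rw [hs, monC_zero, if_pos rfl, if_pos rfl]
      simp
    · rw [if_neg h, if_neg h]
      simp
  rw [Finset.sum_congr rfl fun i _ => hterm i,
    Finset.sum_ite_eq' Finset.univ j (fun i => ((ξ i : ℝ) : ℂ))]
  simp

lemma monC_subd (c : Fin N → ℕ) (i : Fin N) (y : Vec N) :
    monC (subd c i) y = ((y i : ℝ) : ℂ) ^ (c i - 1) *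
      ∏ j ∈ Finset.univ.erase i, ((y j : ℝ) : ℂ) ^ (c j) := by
  rw [monC, ← Finset.mul_prod_erase Finset.univ _ (Finset.mem_univ i)]
  congr 1
  · simp [subd]
  · exact Finset.prod_congr rfl fun j hj => by
      rw [show subd c i j = c j from by simp [subd, (Finset.mem_erase.1 hj).1]]

lemma dmonC_add (c c' : Fin N → ℕ) (ξ y : Vec N) :
    dmonC (fun i => c i + c' i) ξ y
      = dmonC c ξ y * monC c' y + monC c y * dmonC c' ξ y := by
  rw [dmonC, dmonC, dmonC, Finset.sum_mul, Finset.mul_sum, ← Finset.sum_add_distrib]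
  refine Finset.sum_congr rfl fun j _ => ?_
  have t1 : ((c j : ℕ) : ℂ) * monC (subd (fun i => c i + c' i) j) y
      = ((c j : ℕ) : ℂ) * (monC (subd c j) y * monC c' y) := by
    by_cases hc : c j = 0
    · simp [hc]
    · congr 1
      rw [← monC_add]
      congr 1
      funext i; simp only [subd]
      by_cases h : i = j <;> simp [h] <;> omega
  have t2 : ((c' j : ℕ) : ℂ) * monC (subd (fun i => c i + c' i) j) y
      = ((c' j : ℕ) : ℂ) * (monC c y * monC (subd c' j) y) := by
    by_cases hc : c' j = 0
    · simp [hc]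
    · congr 1
      rw [← monC_add]
      congr 1
      funext i; simp only [subd]
      by_cases h : i = j <;> simp [h] <;> omega
  push_cast
  linear_combination ((ξ j : ℝ) : ℂ) * t1 + ((ξ j : ℝ) : ℂ) * t2

lemma monC_continuous (c : Fin N → ℕ) : Continuous fun y : Vec N => monC c y := by
  apply continuous_finset_prod
  intro i _
  have h1 : Continuous fun y : Vec N => ((y i : ℝ) : ℂ) :=
    Complex.continuous_ofReal.comp (EuclideanSpace.proj i).continuous
  exact h1.pow _

lemma monC_path_hasDerivAt (c : Fin N → ℕ) (v y : Vec N) (σ s₀ : ℝ) :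
    HasDerivAt (fun s : ℝ => monC c (y + (σ - s) • v))
      (-(dmonC c v (y + (σ - s₀) • v))) s₀ := by
  have hcoord : ∀ (s : ℝ) (i : Fin N), (y + (σ - s) • v) i = y i + (σ - s) * v i := fun s i => by
    rw [PiLp.add_apply, PiLp.smul_apply, smul_eq_mul]
  have hfacR : ∀ i : Fin N, HasDerivAt (fun s : ℝ => (y i + (σ - s) * v i) ^ (c i))
      ((c i : ℝ) * (y i + (σ - s₀) * v i) ^ (c i - 1) * (-(v i))) s₀ := by
    intro i
    have hinner : HasDerivAt (fun s : ℝ => y i + (σ - s) * v i) (-(v i)) s₀ := by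
      have h1 : HasDerivAt (fun s : ℝ => σ - s) (-1 : ℝ) s₀ := by
        simpa using (hasDerivAt_id s₀).const_sub σ
      have h2 := (h1.mul_const (v i)).const_add (y i)
      simpa using h2
    exact hinner.pow (c i)
  have hprodR := HasDerivAt.fun_finsetProd (u := Finset.univ) (fun i (_ : i ∈ Finset.univ) => hfacR i)
  have hcomp := Complex.ofRealCLM.hasFDerivAt.comp_hasDerivAt s₀ hprodR
  have hfun : (⇑Complex.ofRealCLM ∘ fun s : ℝ => ∏ i : Fin N, (y i + (σ - s) * v i) ^ (c i))
      = fun s : ℝ => monC c (y + (σ - s) • v) := by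
    funext s
    show ((∏ i : Fin N, (y i + (σ - s) * v i) ^ (c i) : ℝ) : ℂ) = _
    rw [monC, Finset.prod_congr rfl (fun i (_ : i ∈ Finset.univ) =>
      show ((((y + (σ - s) • v) i : ℝ)) : ℂ) ^ (c i) = ((y i + (σ - s) * v i : ℝ) : ℂ) ^ (c i)
        from by rw [hcoord s i])]
    norm_cast
  rw [hfun] at hcomp
  refine hcomp.congr_deriv ?_
  symm
  simp only [Complex.ofRealCLM_apply, smul_eq_mul]
  rw [dmonC]
  push_cast
  rw [← Finset.sum_neg_distrib]
  refine Finset.sum_congr rfl fun i _ => ?_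
  rw [monC_subd]
  simp only [hcoord]
  push_cast
  ring

end DunklAux
end

noncomputable section
namespace DunklAux
open MvPolynomial

variable {N : ℕ}

/-- `p` admits a translation family: a finite family of monomial functions of `y` and
polynomials representing `z ↦ p(z + y)`, compatible with directional derivatives. -/
def Good (p : MvPolynomial (Fin N) ℂ) : Prop :=
  ∃ (ι : Type) (_ : Fintype ι) (m : ι → (Fin N → ℕ)) (r : ι → MvPolynomial (Fin N) ℂ),
    ((∑ i : ι, monC (m i) (0 : Vec N) • r i) = p) ∧
    (∀ y : Vec N, (∑ i : ι, monC (m i) y * polyFun (r i) 0) = polyFun p y) ∧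
    (∀ (ξ y : Vec N), (∑ i : ι, dmonC (m i) ξ y • r i)
        = pderivDir ξ (∑ i : ι, monC (m i) y • r i))

lemma good_C (a : ℂ) : Good (C a : MvPolynomial (Fin N) ℂ) := by
  refine ⟨Fin 1, inferInstance, fun _ => fun _ => 0, fun _ => C a, ?_, ?_, ?_⟩
  · rw [Fin.sum_univ_one, monC_zero, one_smul]
  · intro y
    rw [Fin.sum_univ_one, monC_zero, one_mul]
    rw [polyFun_C]
  · intro ξ y
    rw [Fin.sum_univ_one, Fin.sum_univ_one, dmonC_zero, zero_smul, monC_zero, one_smul,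
      pderivDir_C]

lemma good_X (j : Fin N) : Good (X j : MvPolynomial (Fin N) ℂ) := by
  refine ⟨Fin 2, inferInstance,
    ![fun _ => 0, fun i => if i = j then 1 else 0], ![X j, 1], ?_, ?_, ?_⟩
  · rw [Fin.sum_univ_two]
    simp only [Matrix.cons_val_zero, Matrix.cons_val_one, Matrix.head_cons]
    rw [monC_zero, one_smul, monC_single]
    simp
  · intro y
    rw [Fin.sum_univ_two]
    simp only [Matrix.cons_val_zero, Matrix.cons_val_one, Matrix.head_cons]
    rw [monC_zero, one_mul, monC_single, polyFun_X]
    have h1 : polyFun (1 : MvPolynomial (Fin N) ℂ) 0 = 1 := by simp [polyFun]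
    rw [h1, polyFun_X]
    simp
  · intro ξ y
    rw [Fin.sum_univ_two, Fin.sum_univ_two]
    simp only [Matrix.cons_val_zero, Matrix.cons_val_one, Matrix.head_cons]
    rw [monC_zero, one_smul, monC_single, dmonC_zero, zero_smul, dmonC_single,
      pderivDir_add, pderivDir_X, pderivDir_smul, pderivDir_one]
    rw [MvPolynomial.smul_eq_C_mul, mul_one]
    simp

lemma Good.add {p q : MvPolynomial (Fin N) ℂ} (hp : Good p) (hq : Good q) : Good (p + q) := by
  obtain ⟨ι, hι, m, r, h1, h2, h3⟩ := hp
  obtain ⟨κ, hκ, n, t, g1, g2, g3⟩ := hq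
  refine ⟨ι ⊕ κ, @instFintypeSum ι κ hι hκ, Sum.elim m n, Sum.elim r t, ?_, ?_, ?_⟩
  · rw [Fintype.sum_sum_type]
    simpa using congrArg₂ (· + ·) h1 g1
  · intro y
    rw [Fintype.sum_sum_type]
    simp only [Sum.elim_inl, Sum.elim_inr]
    rw [h2 y, g2 y, polyFun_add]
  · intro ξ y
    rw [Fintype.sum_sum_type, Fintype.sum_sum_type]
    simp only [Sum.elim_inl, Sum.elim_inr]
    rw [h3 ξ y, g3 ξ y, ← pderivDir_add]

lemma Good.mul {p q : MvPolynomial (Fin N) ℂ} (hp : Good p) (hq : Good q) : Good (p * q) := by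
  obtain ⟨ι, hι, m, r, h1, h2, h3⟩ := hp
  obtain ⟨κ, hκ, n, t, g1, g2, g3⟩ := hq
  letI : Fintype ι := hι
  letI : Fintype κ := hκ
  have key : ∀ y : Vec N,
      (∑ ik : ι × κ, monC (fun i => m ik.1 i + n ik.2 i) y • (r ik.1 * t ik.2))
      = (∑ i : ι, monC (m i) y • r i) * (∑ j : κ, monC (n j) y • t j) := by
    intro y
    rw [Fintype.sum_prod_type, Finset.sum_mul_sum]
    refine Finset.sum_congr rfl fun i _ => Finset.sum_congr rfl fun j _ => ?_
    rw [monC_add, ← smul_mul_smul_comm]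
  refine ⟨ι × κ, @instFintypeProd ι κ hι hκ, fun ik => fun i => m ik.1 i + n ik.2 i,
    fun ik => r ik.1 * t ik.2, ?_, ?_, ?_⟩
  · rw [key 0, h1, g1]
  · intro y
    rw [polyFun_mul, ← h2 y, ← g2 y, Finset.sum_mul_sum, Fintype.sum_prod_type]
    refine Finset.sum_congr rfl fun i _ => Finset.sum_congr rfl fun j _ => ?_
    rw [monC_add, polyFun_mul]
    ring
  · intro ξ y
    rw [key y, pderivDir_mul, ← h3 ξ y, ← g3 ξ y, Fintype.sum_prod_type,
      Finset.sum_mul_sum, Finset.sum_mul_sum, ← Finset.sum_add_distrib]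
    refine Finset.sum_congr rfl fun i _ => ?_
    rw [← Finset.sum_add_distrib]
    refine Finset.sum_congr rfl fun j _ => ?_
    rw [dmonC_add, add_smul, ← smul_mul_smul_comm, ← smul_mul_smul_comm]

lemma good_all (p : MvPolynomial (Fin N) ℂ) : Good p := by
  induction p using MvPolynomial.induction_on with
  | C a => exact good_C a
  | add p q hp hq => exact hp.add hq
  | mul_X p j hp => exact hp.mul (good_X j)

end DunklAux
end

noncomputable section
namespace DunklAux
open Set Filter
open scoped Topology

variable {N : ℕ}

/-- The two-variable minimum principle: if `u(0,y) ≥ 0` for all `y` and `u` satisfies the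
radial characteristic ODE coming from the intertwining relation, then `u(x,0) ≥ 0`. -/
lemma core_min_principle (Rp : Finset (Vec N)) (k : Vec N → ℝ)
    (hk0 : ∀ α ∈ Rp, 0 ≤ k α) (hnorm : ∀ α ∈ Rp, ⟪α, α⟫ = (2:ℝ))
    (u : Vec N → Vec N → ℝ)
    (hcont : Continuous fun z : Vec N × Vec N => u z.1 z.2)
    (hbase : ∀ y, 0 ≤ u 0 y)
    (hPDE : ∀ (v y₀ : Vec N) (σ : ℝ), 0 < σ →
      HasDerivAt (fun s : ℝ => u (s • v) (y₀ + (σ - s) • v))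
        (-(1/σ) * ∑ α ∈ Rp, k α * (u (σ • v) y₀ - u (σ • v - ⟪α, σ • v⟫ • α) y₀)) σ)
    (x₀ : Vec N) : 0 ≤ u x₀ 0 := by
  by_contra hneg
  push_neg at hneg
  set ρ : ℝ := ‖x₀‖ with hρ
  have hρ0 : 0 ≤ ρ := norm_nonneg _
  set R : ℝ := ρ + 1 with hR
  set ε : ℝ := -(u x₀ 0) / (ρ + 2) with hε
  have hε0 : 0 < ε := div_pos (by linarith) (by linarith)
  set w : Vec N × Vec N → ℝ := fun z => u z.1 z.2 + ε * (‖z.1‖ + 1) with hw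
  have hwdef : ∀ z : Vec N × Vec N, w z = u z.1 z.2 + ε * (‖z.1‖ + 1) := fun z => by rw [hw]
  have hwcont : Continuous w :=
    hcont.add (continuous_const.mul (continuous_fst.norm.add continuous_const))
  set S : Set (Vec N × Vec N) := {z | ‖z.1‖ ≤ ρ ∧ ‖z.1‖ + ‖z.2‖ ≤ R ∧ w z ≤ 0} with hSdef
  have hx₀S : ((x₀, (0 : Vec N)) : Vec N × Vec N) ∈ S := by
    refine ⟨le_refl _, ?_, ?_⟩
    · show ‖x₀‖ + ‖(0 : Vec N)‖ ≤ R
      rw [norm_zero, add_zero, ← hρ, hR]; linarith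
    · rw [hwdef]
      show u x₀ 0 + ε * (‖x₀‖ + 1) ≤ 0
      rw [← hρ]
      have h2 : (0:ℝ) < ρ + 2 := by linarith
      have h3 : ε * (ρ + 1) ≤ -(u x₀ 0) := by
        rw [hε, div_mul_eq_mul_div, div_le_iff₀ h2]
        nlinarith
      linarith
  have hSclosed : IsClosed S := by
    apply IsClosed.inter
    · exact isClosed_le continuous_fst.norm continuous_const
    apply IsClosed.inter
    · exact isClosed_le (continuous_fst.norm.add continuous_snd.norm) continuous_const
    · exact isClosed_le hwcont continuous_const
  have hSbdd : Bornology.IsBounded S := by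
    apply Bornology.IsBounded.subset
      ((Metric.isBounded_closedBall (x := (0 : Vec N)) (r := ρ)).prod
        (Metric.isBounded_closedBall (x := (0 : Vec N)) (r := R)))
    intro z hz
    refine Set.mem_prod.2 ⟨?_, ?_⟩
    · exact Metric.mem_closedBall.2 (by simpa [dist_zero_right] using hz.1)
    · refine Metric.mem_closedBall.2 ?_
      have h2 := hz.2.1
      have h1 := norm_nonneg z.1
      simp only [dist_zero_right]
      linarith
  have hScpt : IsCompact S := Metric.isCompact_of_isClosed_isBounded hSclosed hSbdd
  obtain ⟨zm, hzmS, hzmin⟩ := hScpt.exists_isMinOn ⟨_, hx₀S⟩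
    ((continuous_fst.norm).continuousOn : ContinuousOn (fun z : Vec N × Vec N => ‖z.1‖) S)
  set sb : ℝ := ‖zm.1‖ with hsb
  have hw0pos : ∀ y : Vec N, 0 < w (0, y) := by
    intro y
    rw [hwdef]
    have := hbase y
    simp only [norm_zero, zero_add, mul_one]
    linarith
  have hsbpos : 0 < sb := by
    rcases (norm_nonneg zm.1).lt_or_eq with h | h
    · exact h
    · exfalso
      have h1 : zm.1 = 0 := by rwa [eq_comm, norm_eq_zero] at h
      have h2 : w zm ≤ 0 := hzmS.2.2
      have h3 : 0 < w (0, zm.2) := hw0pos zm.2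
      rw [show ((0 : Vec N), zm.2) = zm from by rw [← h1]] at h3
      linarith
  have hF3 : ∀ z : Vec N × Vec N, ‖z.1‖ ≤ sb → ‖z.1‖ + ‖z.2‖ ≤ R → 0 ≤ w z := by
    intro z h1 h2
    by_contra h3
    push_neg at h3
    have hct : ContinuousAt (fun t : ℝ => w (t • z.1, z.2)) 1 := by
      have hmap : Continuous fun t : ℝ => ((t • z.1, z.2) : Vec N × Vec N) :=
        (continuous_id.smul continuous_const).prodMk continuous_const
      exact (hwcont.comp hmap).continuousAt
    have h3' : w ((1:ℝ) • z.1, z.2) < 0 := by rw [one_smul]; simpa using h3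
    have hev : ∀ᶠ t in 𝓝 (1:ℝ), w (t • z.1, z.2) < 0 := hct (Iio_mem_nhds h3')
    have hev' : ∀ᶠ t in 𝓝[<] (1:ℝ), w (t • z.1, z.2) < 0 := hev.filter_mono nhdsWithin_le_nhds
    have hmem : Ioo (0:ℝ) 1 ∈ 𝓝[<] (1:ℝ) := Ioo_mem_nhdsLT zero_lt_one
    obtain ⟨t, htneg, ht01⟩ := (hev'.and (eventually_of_mem hmem (fun t ht => ht))).exists
    have hnt : ‖t • z.1‖ = t * ‖z.1‖ := by
      rw [norm_smul, Real.norm_eq_abs, abs_of_pos ht01.1]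
    have htS : ((t • z.1, z.2) : Vec N × Vec N) ∈ S := by
      have hle : t * ‖z.1‖ ≤ ‖z.1‖ := by
        nlinarith [norm_nonneg z.1, ht01.1.le, ht01.2.le]
      refine ⟨?_, ?_, htneg.le⟩
      · show ‖t • z.1‖ ≤ ρ
        rw [hnt]
        have hsbρ : sb ≤ ρ := hzmS.1
        linarith
      · show ‖t • z.1‖ + ‖z.2‖ ≤ R
        rw [hnt]; linarith
    have hmin0 := isMinOn_iff.1 hzmin (t • z.1, z.2) htS
    simp only at hmin0
    rw [← hsb, hnt] at hmin0
    have hmin' := hmin0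
    nlinarith [ht01.1, ht01.2, hsbpos, h1, hmin']
  have hwzm : w zm = 0 :=
    le_antisymm hzmS.2.2 (hF3 zm (le_refl _) hzmS.2.1)
  set v : Vec N := sb⁻¹ • zm.1 with hv
  have hvsmul : sb • v = zm.1 := by
    rw [hv, smul_smul, mul_inv_cancel₀ (ne_of_gt hsbpos), one_smul]
  have hvnorm : ‖v‖ = 1 := by
    rw [hv, norm_smul, Real.norm_eq_abs, abs_of_pos (inv_pos.2 hsbpos), ← hsb,
      inv_mul_cancel₀ (ne_of_gt hsbpos)]
  set yb : Vec N := zm.2 with hyb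
  have ezm : u zm.1 yb + ε * (sb + 1) = 0 := by
    rw [← hwzm, hwdef]
  have hderiv := hPDE v yb sb hsbpos
  set Dval : ℝ := -(1/sb) * ∑ α ∈ Rp, k α * (u (sb • v) yb - u (sb • v - ⟪α, sb • v⟫ • α) yb)
    with hDval
  have hDval0 : 0 ≤ Dval := by
    rw [hDval]
    have hsum : (∑ α ∈ Rp, k α * (u (sb • v) yb - u (sb • v - ⟪α, sb • v⟫ • α) yb)) ≤ 0 := by
      apply Finset.sum_nonpos
      intro α hα
      apply mul_nonpos_of_nonneg_of_nonpos (hk0 α hα)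
      rw [hvsmul]
      have hrefl_norm : ‖zm.1 - ⟪α, zm.1⟫ • α‖ = ‖zm.1‖ := norm_reflect α zm.1 (hnorm α hα)
      have hreflw : 0 ≤ w (zm.1 - ⟪α, zm.1⟫ • α, yb) := by
        apply hF3
        · rw [hrefl_norm]
        · rw [hrefl_norm]
          exact hzmS.2.1
      rw [hwdef] at hreflw
      simp only at hreflw
      rw [hrefl_norm, ← hsb] at hreflw
      linarith
    have h1 : -(1/sb) ≤ 0 := by
      have : 0 < 1/sb := by positivity
      linarith
    nlinarith [hsum, h1]
  have hlin : HasDerivAt (fun s : ℝ => ε * (s + 1)) ε sb := by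
    simpa using ((hasDerivAt_id sb).add_const (1:ℝ)).const_mul ε
  have hWeps : HasDerivAt (fun s : ℝ => u (s • v) (yb + (sb - s) • v) + ε * (s + 1))
      (Dval + ε) sb := hderiv.add hlin
  have hWepssb : u (sb • v) (yb + (sb - sb) • v) + ε * (sb + 1) = 0 := by
    rw [sub_self, zero_smul, add_zero, hvsmul]
    exact ezm
  have hWepsnn : ∀ s ∈ Ioo (0:ℝ) sb, 0 ≤ u (s • v) (yb + (sb - s) • v) + ε * (s + 1) := by
    intro s hs
    have hnsv : ‖s • v‖ = s := by
      rw [norm_smul, Real.norm_eq_abs, abs_of_pos hs.1, hvnorm, mul_one]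
    have hy : ‖yb + (sb - s) • v‖ ≤ ‖yb‖ + (sb - s) := by
      refine (norm_add_le _ _).trans ?_
      rw [norm_smul, Real.norm_eq_abs, abs_of_pos (by linarith [hs.2] : (0:ℝ) < sb - s), hvnorm,
        mul_one]
    have hsum2 : sb + ‖yb‖ ≤ R := hzmS.2.1
    have hF := hF3 (s • v, yb + (sb - s) • v)
      (by rw [hnsv] at *; exact hs.2.le)
      (by
        show ‖s • v‖ + ‖yb + (sb - s) • v‖ ≤ R
        rw [hnsv]
        linarith)
    rw [hwdef] at hF
    simp only at hF
    rw [hnsv] at hF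
    exact hF
  have htend := hasDerivAt_iff_tendsto_slope.1 hWeps
  have hmono : 𝓝[Ioo (0:ℝ) sb] sb ≤ 𝓝[≠] sb :=
    nhdsWithin_mono _ (fun s hs => ne_of_lt hs.2)
  haveI hneBot : (𝓝[Ioo (0:ℝ) sb] sb).NeBot := by
    apply mem_closure_iff_nhdsWithin_neBot.1
    rw [closure_Ioo (ne_of_lt hsbpos)]
    exact ⟨hsbpos.le, le_refl _⟩
  have hslope : ∀ᶠ s in 𝓝[Ioo (0:ℝ) sb] sb,
      slope (fun s : ℝ => u (s • v) (yb + (sb - s) • v) + ε * (s + 1)) sb s ≤ 0 := by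
    refine eventually_of_mem self_mem_nhdsWithin fun s hs => ?_
    rw [slope_def_field]
    rw [hWepssb, sub_zero]
    apply div_nonpos_of_nonneg_of_nonpos
    · exact hWepsnn s hs
    · linarith [hs.2]
  have hlim : Dval + ε ≤ 0 := le_of_tendsto (htend.mono_left hmono) hslope
  linarith

end DunklAux
end

noncomputable section
namespace DunklAux
open MvPolynomial Set Filter
open scoped Topology

lemma cancel_aux (a b c d : ℂ) (hb : b ≠ 0) (hc : c ≠ 0) :
    a * b * (d / (c * b)) = a / c * d := by
  field_simp

lemma main_aux {N : ℕ} (Rp : Finset (Vec N)) (k : Vec N → ℝ)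
    (hk0 : ∀ α ∈ Rp, 0 ≤ k α) (hnorm : ∀ α ∈ Rp, ⟪α, α⟫ = (2:ℝ))
    (V : MvPolynomial (Fin N) ℂ ≃ₗ[ℂ] MvPolynomial (Fin N) ℂ)
    (hV1 : ∀ n : ℕ, Submodule.map (V : MvPolynomial (Fin N) ℂ →ₗ[ℂ] MvPolynomial (Fin N) ℂ)
      (MvPolynomial.homogeneousSubmodule (Fin N) ℂ n) = MvPolynomial.homogeneousSubmodule (Fin N) ℂ n)
    (hV2 : ∀ c : ℂ, V (MvPolynomial.C c) = MvPolynomial.C c)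
    (hV3 : ∀ ξ : Vec N, ∀ q : MvPolynomial (Fin N) ℂ, ∀ x : Vec N,
      dunklOp (fun α => ((k α : ℝ) : ℂ)) Rp ξ (polyFun (V q)) x = polyFun (V (pderivDir ξ q)) x)
    (p : MvPolynomial (Fin N) ℂ)
    (hp : ∀ x : Vec N, (polyFun p x).im = 0 ∧ 0 ≤ (polyFun p x).re)
    (ι : Type) (hι : Fintype ι) (m : ι → Fin N → ℕ) (r : ι → MvPolynomial (Fin N) ℂ)
    (hO1 : (∑ i : ι, monC (m i) (0 : Vec N) • r i) = p)
    (hO2 : ∀ y : Vec N, (∑ i : ι, monC (m i) y * polyFun (r i) 0) = polyFun p y)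
    (hO3 : ∀ ξ y : Vec N, (∑ i : ι, dmonC (m i) ξ y • r i)
        = pderivDir ξ (∑ i : ι, monC (m i) y • r i)) :
    ∀ x : Vec N, (polyFun (V p) x).im = 0 ∧ 0 ≤ (polyFun (V p) x).re := by
  letI : Fintype ι := hι
  set qf : Vec N → MvPolynomial (Fin N) ℂ := fun y => ∑ i : ι, monC (m i) y • r i with hqf
  set U : Vec N → Vec N → ℂ := fun x y => polyFun (V (qf y)) x with hU
  have hUsum : ∀ x y : Vec N, U x y = ∑ i : ι, monC (m i) y * polyFun (V (r i)) x := by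
    intro x y
    rw [hU]
    show polyFun (V (qf y)) x = _
    rw [hqf]
    show polyFun (V (∑ i : ι, monC (m i) y • r i)) x = _
    rw [map_sum, polyFun_sum]
    exact Finset.sum_congr rfl fun i _ => by rw [_root_.map_smul, polyFun_smul]
  have hUcont : Continuous fun z : Vec N × Vec N => U z.1 z.2 := by
    have : (fun z : Vec N × Vec N => U z.1 z.2)
        = fun z : Vec N × Vec N => ∑ i : ι, monC (m i) z.2 * polyFun (V (r i)) z.1 := by
      funext z; exact hUsum z.1 z.2
    rw [this]
    apply continuous_finset_sum
    intro i _
    exact ((monC_continuous (m i)).comp continuous_snd).mul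
      ((polyFun_continuous (V (r i))).comp continuous_fst)
  have hU0y : ∀ y : Vec N, U 0 y = polyFun p y := by
    intro y
    rw [hU]
    show polyFun (V (qf y)) 0 = _
    rw [polyFun_V_zero V hV1 hV2, hqf]
    show polyFun (∑ i : ι, monC (m i) y • r i) 0 = _
    rw [polyFun_sum, ← hO2 y]
    exact Finset.sum_congr rfl fun i _ => by rw [polyFun_smul]
  have hUx0 : ∀ x : Vec N, U x 0 = polyFun (V p) x := by
    intro x
    rw [hU]
    show polyFun (V (qf 0)) x = _
    rw [hqf]
    show polyFun (V (∑ i : ι, monC (m i) (0 : Vec N) • r i)) x = _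
    rw [hO1]
  -- the key complex PDE along radial characteristics
  have hkey : ∀ (v y₀ : Vec N) (σ : ℝ), 0 < σ →
      HasDerivAt (fun s : ℝ => U (s • v) (y₀ + (σ - s) • v))
        (((-(1/σ) : ℝ) : ℂ) * ∑ α ∈ Rp, ((k α : ℝ) : ℂ) *
          (U (σ • v) y₀ - U (σ • v - ⟪α, σ • v⟫ • α) y₀)) σ := by
    intro v y₀ σ hσ
    have hfun : (fun s : ℝ => U (s • v) (y₀ + (σ - s) • v))
        = fun s : ℝ => ∑ i : ι, monC (m i) (y₀ + (σ - s) • v) * polyFun (V (r i)) (s • v) := by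
      funext s; exact hUsum _ _
    have hterm : ∀ i : ι, HasDerivAt
        (fun s : ℝ => monC (m i) (y₀ + (σ - s) • v) * polyFun (V (r i)) (s • v))
        (monC (m i) y₀ * polyCLM (V (r i)) (σ • v) v
          - dmonC (m i) v y₀ * polyFun (V (r i)) (σ • v)) σ := by
      intro i
      have hmon := monC_path_hasDerivAt (m i) v y₀ σ σ
      rw [sub_self, zero_smul, add_zero] at hmon
      have hpath : HasDerivAt (fun s : ℝ => s • v) v σ := by
        simpa using (hasDerivAt_id σ).smul_const v
      have hF : HasDerivAt (fun s : ℝ => polyFun (V (r i)) (s • v))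
          (polyCLM (V (r i)) (σ • v) v) σ := by
          have := (polyFun_hasFDerivAt (V (r i)) (σ • v)).comp_hasDerivAt σ hpath
          exact this
      have hmul := hmon.mul hF
      refine hmul.congr_deriv ?_
      rw [sub_self, zero_smul, add_zero]
      ring
    have hsum := HasDerivAt.fun_sum (fun i (_ : i ∈ Finset.univ) => hterm i)
    rw [← hfun] at hsum
    refine hsum.congr_deriv ?_
    symm
    -- identify the derivative value
    have hsplit : (∑ i : ι, (monC (m i) y₀ * polyCLM (V (r i)) (σ • v) v
          - dmonC (m i) v y₀ * polyFun (V (r i)) (σ • v)))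
        = (∑ i : ι, monC (m i) y₀ * polyCLM (V (r i)) (σ • v) v)
          - (∑ i : ι, dmonC (m i) v y₀ * polyFun (V (r i)) (σ • v)) := by
      rw [Finset.sum_sub_distrib]
    rw [hsplit]
    have hA : (∑ i : ι, monC (m i) y₀ * polyCLM (V (r i)) (σ • v) v)
        = fderiv ℝ (polyFun (V (qf y₀))) (σ • v) v := by
      rw [fderiv_polyFun, polyCLM_eq_pderivDir]
      have hVq : V (qf y₀) = ∑ i : ι, monC (m i) y₀ • V (r i) := by
        rw [hqf]
        show V (∑ i : ι, monC (m i) y₀ • r i) = _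
        rw [map_sum]
        exact Finset.sum_congr rfl fun i _ => by rw [_root_.map_smul]
      rw [hVq, pderivDir_sum, polyFun_sum]
      refine Finset.sum_congr rfl fun i _ => ?_
      rw [pderivDir_smul, polyFun_smul, polyCLM_eq_pderivDir]
    have hB : (∑ i : ι, dmonC (m i) v y₀ * polyFun (V (r i)) (σ • v))
        = polyFun (V (pderivDir v (qf y₀))) (σ • v) := by
      have h1 : pderivDir v (qf y₀) = ∑ i : ι, dmonC (m i) v y₀ • r i := by
        rw [hO3 v y₀, hqf]
      rw [h1, map_sum, polyFun_sum]
      exact Finset.sum_congr rfl fun i _ => by rw [_root_.map_smul, polyFun_smul]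
    have hVeq := hV3 v (qf y₀) (σ • v)
    simp only [dunklOp] at hVeq
    -- per-root identity
    have hInt : ∀ α ∈ Rp, ((k α : ℝ) : ℂ) * ((⟪α, v⟫ : ℝ) : ℂ) *
        (∫ t in (0:ℝ)..(1:ℝ), fderiv ℝ (polyFun (V (qf y₀))) (σ • v - (t * ⟪α, σ • v⟫) • α) α)
        = (((k α : ℝ) : ℂ) / ((σ : ℝ) : ℂ)) *
          (U (σ • v) y₀ - U (σ • v - ⟪α, σ • v⟫ • α) y₀) := by
      intro α hα
      by_cases hv0 : ⟪α, v⟫ = (0:ℝ)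
      · have h1 : ⟪α, σ • v⟫ = (0:ℝ) := by
          rw [real_inner_smul_right, hv0, mul_zero]
        rw [hv0, h1]
        simp
      · have h1 : ⟪α, σ • v⟫ = σ * ⟪α, v⟫ := real_inner_smul_right α v σ
        have hne : ⟪α, σ • v⟫ ≠ (0:ℝ) := by
          rw [h1]; exact mul_ne_zero (ne_of_gt hσ) hv0
        rw [dunkl_integral_eq (V (qf y₀)) (σ • v) α hne]
        have hU1 : polyFun (V (qf y₀)) (σ • v) = U (σ • v) y₀ := by rw [hU]
        have hU2 : polyFun (V (qf y₀)) (σ • v - ⟪α, σ • v⟫ • α)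
            = U (σ • v - ⟪α, σ • v⟫ • α) y₀ := by rw [hU]
        rw [hU1, hU2, h1]
        have hσC : ((σ : ℝ) : ℂ) ≠ 0 := Complex.ofReal_ne_zero.2 (ne_of_gt hσ)
        have hvC : ((⟪α, v⟫ : ℝ) : ℂ) ≠ 0 := Complex.ofReal_ne_zero.2 hv0
        rw [Complex.ofReal_mul]
        exact cancel_aux _ _ _ _ hvC hσC
    have hsum2 : (∑ α ∈ Rp, ((k α : ℝ) : ℂ) * ((⟪α, v⟫ : ℝ) : ℂ) *
        (∫ t in (0:ℝ)..(1:ℝ), fderiv ℝ (polyFun (V (qf y₀))) (σ • v - (t * ⟪α, σ • v⟫) • α) α))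
        = ∑ α ∈ Rp, (((k α : ℝ) : ℂ) / ((σ : ℝ) : ℂ)) *
          (U (σ • v) y₀ - U (σ • v - ⟪α, σ • v⟫ • α) y₀) :=
      Finset.sum_congr rfl hInt
    rw [hA]
    -- from hVeq : fderiv + ∑ = polyFun (V (pderivDir v (qf y₀))) (σ•v)
    have hAB : fderiv ℝ (polyFun (V (qf y₀))) (σ • v) v
        - (∑ i : ι, dmonC (m i) v y₀ * polyFun (V (r i)) (σ • v))
        = -(∑ α ∈ Rp, (((k α : ℝ) : ℂ) / ((σ : ℝ) : ℂ)) *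
            (U (σ • v) y₀ - U (σ • v - ⟪α, σ • v⟫ • α) y₀)) := by
      rw [hB, ← hsum2]
      rw [← hVeq]
      ring
    rw [hAB]
    have hσC : ((σ : ℝ) : ℂ) ≠ 0 := Complex.ofReal_ne_zero.2 (ne_of_gt hσ)
    rw [← Finset.sum_neg_distrib, Finset.mul_sum]
    refine Finset.sum_congr rfl fun α _ => ?_
    push_cast
    field_simp
  -- apply the minimum principle to real and imaginary parts
  intro x₀
  have hre : 0 ≤ (U x₀ 0).re := by
    apply core_min_principle Rp k hk0 hnorm (fun x y => (U x y).re)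
    · exact Complex.continuous_re.comp hUcont
    · intro y
      have h1 : (U 0 y).re = (polyFun p y).re := by rw [hU0y y]
      rw [h1]
      exact (hp y).2
    · intro v y₀ σ hσ
      have h := hkey v y₀ σ hσ
      have h2 : HasDerivAt (fun s : ℝ => (U (s • v) (y₀ + (σ - s) • v)).re)
          ((((-(1/σ) : ℝ) : ℂ) * ∑ α ∈ Rp, ((k α : ℝ) : ℂ) *
            (U (σ • v) y₀ - U (σ • v - ⟪α, σ • v⟫ • α) y₀)).re) σ :=
        Complex.reCLM.hasFDerivAt.comp_hasDerivAt σ h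
      have hval : (((-(1/σ) : ℝ) : ℂ) * ∑ α ∈ Rp, ((k α : ℝ) : ℂ) *
            (U (σ • v) y₀ - U (σ • v - ⟪α, σ • v⟫ • α) y₀)).re
          = -(1/σ) * ∑ α ∈ Rp, k α *
              ((U (σ • v) y₀).re - (U (σ • v - ⟪α, σ • v⟫ • α) y₀).re) := by
        rw [Complex.re_ofReal_mul, Complex.re_sum]
        congr 1
        exact Finset.sum_congr rfl fun α _ => by rw [Complex.re_ofReal_mul, Complex.sub_re]
      rw [← hval]
      exact h2
  have him : ∀ v y₀ σ, (0:ℝ) < σ → HasDerivAt (fun s : ℝ => (U (s • v) (y₀ + (σ - s) • v)).im)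
      (-(1/σ) * ∑ α ∈ Rp, k α *
        ((U (σ • v) y₀).im - (U (σ • v - ⟪α, σ • v⟫ • α) y₀).im)) σ := by
    intro v y₀ σ hσ
    have h := hkey v y₀ σ hσ
    have h2 : HasDerivAt (fun s : ℝ => (U (s • v) (y₀ + (σ - s) • v)).im)
        ((((-(1/σ) : ℝ) : ℂ) * ∑ α ∈ Rp, ((k α : ℝ) : ℂ) *
          (U (σ • v) y₀ - U (σ • v - ⟪α, σ • v⟫ • α) y₀)).im) σ :=
      Complex.imCLM.hasFDerivAt.comp_hasDerivAt σ h
    have hval : (((-(1/σ) : ℝ) : ℂ) * ∑ α ∈ Rp, ((k α : ℝ) : ℂ) *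
          (U (σ • v) y₀ - U (σ • v - ⟪α, σ • v⟫ • α) y₀)).im
        = -(1/σ) * ∑ α ∈ Rp, k α *
            ((U (σ • v) y₀).im - (U (σ • v - ⟪α, σ • v⟫ • α) y₀).im) := by
      rw [Complex.im_ofReal_mul, Complex.im_sum]
      congr 1
      exact Finset.sum_congr rfl fun α _ => by rw [Complex.im_ofReal_mul, Complex.sub_im]
    rw [← hval]
    exact h2
  have him1 : 0 ≤ (U x₀ 0).im := by
    apply core_min_principle Rp k hk0 hnorm (fun x y => (U x y).im)
    · exact Complex.continuous_im.comp hUcont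
    · intro y
      have h1 : (U 0 y).im = (polyFun p y).im := by rw [hU0y y]
      rw [h1, (hp y).1]
    · exact him
  have him2 : 0 ≤ -((U x₀ 0).im) := by
    apply core_min_principle Rp k hk0 hnorm (fun x y => -((U x y).im))
    · exact (Complex.continuous_im.comp hUcont).neg
    · intro y
      have h1 : (U 0 y).im = (polyFun p y).im := by rw [hU0y y]
      rw [h1, (hp y).1, neg_zero]
    · intro v y₀ σ hσ
      have h3 := (him v y₀ σ hσ).neg
      refine h3.congr_deriv ?_
      symm
      rw [Finset.sum_congr rfl (fun α (_ : α ∈ Rp) => show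
          k α * (-((U (σ • v) y₀).im) - -((U (σ • v - ⟪α, σ • v⟫ • α) y₀).im))
          = -(k α * ((U (σ • v) y₀).im - (U (σ • v - ⟪α, σ • v⟫ • α) y₀).im)) from by ring)]
      rw [Finset.sum_neg_distrib]
      ring
  refine ⟨?_, ?_⟩
  · rw [← hUx0 x₀]
    linarith [him1, him2]
  · rw [← hUx0 x₀]
    exact hre

end DunklAux
end
/-- (Positivity of Dunkl's intertwining operator) Let `k ≥ 0`.
If `p ∈ Π` satisfies `p(x) ≥ 0` for all `x ∈ ℝ^N`, then `V_k p(x) ≥ 0` for all `x`. -/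
theorem intertwiner_positive {N : ℕ} (hN : 1 ≤ N) (R Rp : Finset (Vec N))
    (hR : IsRootSystem R) (hRp : IsPositiveSubsystem R Rp)
    (k : Vec N → ℝ) (hk : IsMultiplicity R (fun α => ((k α : ℝ) : ℂ)))
    (hk0 : ∀ α ∈ R, 0 ≤ k α)
    (V : MvPolynomial (Fin N) ℂ ≃ₗ[ℂ] MvPolynomial (Fin N) ℂ)
    (hV : IsIntertwiner (fun α => ((k α : ℝ) : ℂ)) Rp V)
    (p : MvPolynomial (Fin N) ℂ)
    (hp : ∀ x : Vec N, (polyFun p x).im = 0 ∧ 0 ≤ (polyFun p x).re) :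
    ∀ x : Vec N, (polyFun (V p) x).im = 0 ∧ 0 ≤ (polyFun (V p) x).re := by
  obtain ⟨hV1, hV2, hV3⟩ := hV
  obtain ⟨ι, hι, m, r, hO1, hO2, hO3⟩ := DunklAux.good_all p
  exact DunklAux.main_aux Rp k (fun α hα => hk0 α (hRp.subset hα))
    (fun α hα => hR.normalized α (hRp.subset hα)) V hV1 hV2 hV3 p hp ι hι m r hO1 hO2 hO3
end
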